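/- arXiv:2502.18053 — 3 statements merged into one kernel-verified Lean document; each statement's English description precedes it below -/
import Mathlib

section
/- Let $F$ be a finite extension of $\mathbf{Q}_p$ with ring of integers $o_F$, uniformizer $\pi$ and residue cardinality $q$, and let $[\pi](X) = \pi X + X^q$ define the Lubin--Tate formal group. With $\phi(f)(X) = f([\pi](X))$, the ring $o_F[[X]]$ is a free $\phi(o_F[[X]])$-module with basis $1, X, \dots, X^{q-1}$. -/
set_option maxHeartbeats 1000000
set_option synthInstance.maxHeartbeats 200000

open PowerSeries

noncomputable def PSComp {R : Type*} [CommRing R] (f g : PowerSeries R) : PowerSeries R :=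
  PowerSeries.mk fun m => ∑ n ∈ Finset.range (m + 1),
    PowerSeries.coeff (R := R) m (PowerSeries.C (R := R) (PowerSeries.coeff (R := R) n f) * g ^ n)

namespace LTAux

variable {R : Type*} [CommRing R]

lemma coeff_PSComp (f g : R⟦X⟧) (m : ℕ) :
    coeff m (PSComp f g) = ∑ n ∈ Finset.range (m+1), coeff n f * coeff m (g ^ n) := by
  simp [PSComp, coeff_mk, coeff_C_mul]

lemma PSComp_add (f f' g : R⟦X⟧) : PSComp (f + f') g = PSComp f g + PSComp f' g := by
  ext m
  simp [coeff_PSComp, add_mul, Finset.sum_add_distrib]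

lemma PSComp_C_mul (c : R) (f g : R⟦X⟧) : PSComp (C c * f) g = C c * PSComp f g := by
  ext m
  simp [coeff_PSComp, coeff_C_mul, Finset.mul_sum, mul_assoc]

lemma PSComp_zero (g : R⟦X⟧) : PSComp 0 g = 0 := by
  ext m; simp [coeff_PSComp]

lemma PSComp_sub (f f' g : R⟦X⟧) : PSComp (f - f') g = PSComp f g - PSComp f' g := by
  ext m
  simp [coeff_PSComp, sub_mul, Finset.sum_sub_distrib]

lemma map_PSComp {A : Type*} [CommRing A] (pr : R →+* A) (f g : R⟦X⟧) :
    map pr (PSComp f g) = PSComp (map pr f) (map pr g) := by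
  ext m
  simp only [coeff_map, coeff_PSComp, map_sum, map_mul]
  refine Finset.sum_congr rfl fun n _ => ?_
  rw [← coeff_map, ← coeff_map, ← map_pow]

lemma coeff_PSComp_mem (I : Ideal R) {f : R⟦X⟧} (g : R⟦X⟧)
    (hf : ∀ n, coeff n f ∈ I) (m : ℕ) : coeff m (PSComp f g) ∈ I := by
  rw [coeff_PSComp]
  exact Ideal.sum_mem _ fun n _ => Ideal.mul_mem_right _ _ (hf n)

variable {q : ℕ}

lemma coeff_PSComp_Xq (hq : 0 < q) (h : R⟦X⟧) (m : ℕ) :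
    coeff m (PSComp h ((X : R⟦X⟧) ^ q)) = if q ∣ m then coeff (m / q) h else 0 := by
  rw [coeff_PSComp]
  have key : ∀ n ∈ Finset.range (m+1),
      coeff n h * coeff m (((X : R⟦X⟧)^q)^n) = if n = m / q ∧ q ∣ m then coeff n h else 0 := by
    intro n _
    rw [← pow_mul, coeff_X_pow]
    rcases eq_or_ne m (q * n) with rfl | hne
    · have h1 : q * n / q = n := Nat.mul_div_cancel_left n hq
      simp [h1, Dvd.intro n rfl]
    · have h2 : ¬ (n = m / q ∧ q ∣ m) := by
        rintro ⟨rfl, s, hs⟩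
        exact hne (by rw [hs, Nat.mul_div_cancel_left s hq])
      simp [hne, h2]
  rw [Finset.sum_congr rfl key]
  by_cases hd : q ∣ m
  · have hmem : m / q ∈ Finset.range (m + 1) :=
      Finset.mem_range.2 (Nat.lt_succ_of_le (Nat.div_le_self m q))
    simp only [hd, and_true, if_pos]
    rw [Finset.sum_ite_eq' (Finset.range (m+1)) (m / q) (fun n => coeff n h)]
    simp [hmem]
  · simp [hd]

lemma coeff_Psi (hq : 0 < q) (w : Fin q → R⟦X⟧) (m : ℕ) :
    coeff m (∑ i : Fin q, (X : R⟦X⟧) ^ (i : ℕ) * PSComp (w i) (X ^ q)) =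
      coeff (m / q) (w ⟨m % q, Nat.mod_lt _ hq⟩) := by
  rw [map_sum]
  have hmq : m - m % q = q * (m / q) := by
    have := Nat.div_add_mod m q; omega
  have key : ∀ i : Fin q,
      coeff m ((X : R⟦X⟧) ^ (i:ℕ) * PSComp (w i) (X ^ q)) =
        if i = (⟨m % q, Nat.mod_lt _ hq⟩ : Fin q) then coeff (m / q) (w i) else 0 := by
    intro i
    rw [coeff_X_pow_mul', coeff_PSComp_Xq hq]
    by_cases hi : (i : ℕ) = m % q
    · have hle : (i : ℕ) ≤ m := hi ▸ Nat.mod_le m q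
      have hdvd : q ∣ m - (i : ℕ) := hi ▸ (hmq ▸ Dvd.intro (m / q) rfl)
      have hdiv : (m - (i:ℕ)) / q = m / q := by
        rw [hi, hmq, Nat.mul_div_cancel_left _ hq]
      have hieq : i = (⟨m % q, Nat.mod_lt _ hq⟩ : Fin q) := Fin.ext hi
      rw [if_pos hle, if_pos hdvd, if_pos hieq, hdiv]
    · have hne : i ≠ (⟨m % q, Nat.mod_lt _ hq⟩ : Fin q) :=
        fun h => hi (by simpa using congrArg Fin.val h)
      rw [if_neg hne]
      by_cases hle : (i : ℕ) ≤ m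
      · have hndvd : ¬ q ∣ m - (i : ℕ) := by
          rintro ⟨s, hs⟩
          apply hi
          have him : m = q * s + i := by omega
          rw [him, Nat.mul_add_mod, Nat.mod_eq_of_lt i.isLt]
        rw [if_pos hle, if_neg hndvd]
      · rw [if_neg hle]
  rw [Finset.sum_congr rfl (fun i _ => key i), Finset.sum_ite_eq']
  simp

/-- digit lift -/
noncomputable def L (q : ℕ) (h : R⟦X⟧) : Fin q → R⟦X⟧ :=
  fun i => PowerSeries.mk fun n => coeff (q * n + i) h

lemma Psi_L (hq : 0 < q) (h : R⟦X⟧) :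
    (∑ i : Fin q, (X : R⟦X⟧) ^ (i : ℕ) * PSComp (L q h i) (X ^ q)) = h := by
  ext m
  rw [coeff_Psi hq]
  simp only [L, coeff_mk]
  conv_rhs => rw [← Nat.div_add_mod m q]

lemma Psi_eq_zero (hq : 0 < q) (w : Fin q → R⟦X⟧)
    (h0 : (∑ i : Fin q, (X : R⟦X⟧) ^ (i : ℕ) * PSComp (w i) (X ^ q)) = 0) : ∀ i, w i = 0 := by
  intro i
  ext n
  have h1 := congrArg (coeff (q * n + i)) h0
  rw [coeff_Psi hq] at h1
  have hmod : (q * n + (i:ℕ)) % q = (i : ℕ) := by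
    rw [Nat.mul_add_mod]; exact Nat.mod_eq_of_lt i.isLt
  have hdiv : (q * n + (i:ℕ)) / q = n := by
    rw [Nat.mul_add_div hq, Nat.div_eq_of_lt i.isLt, add_zero]
  simp only [hdiv, hmod, Fin.eta, map_zero] at h1
  simpa using h1


section Phi

variable (π : R) (q : ℕ)

noncomputable def Phi (v : Fin q → R⟦X⟧) : R⟦X⟧ :=
  ∑ i : Fin q, (X : R⟦X⟧) ^ (i : ℕ) * PSComp (v i) (C π * X + X ^ q)

lemma Phi_add (v w : Fin q → R⟦X⟧) :
    Phi π q (fun i => v i + w i) = Phi π q v + Phi π q w := by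
  simp [Phi, PSComp_add, mul_add, Finset.sum_add_distrib]

lemma Phi_sub (v w : Fin q → R⟦X⟧) :
    Phi π q (fun i => v i - w i) = Phi π q v - Phi π q w := by
  simp [Phi, PSComp_sub, mul_sub, Finset.sum_sub_distrib]

lemma Phi_C_mul (c : R) (v : Fin q → R⟦X⟧) :
    Phi π q (fun i => C c * v i) = C c * Phi π q v := by
  simp only [Phi, PSComp_C_mul, Finset.mul_sum]
  exact Finset.sum_congr rfl fun i _ => by ring

lemma Phi_zero : Phi π q (fun _ => 0) = 0 := by
  simp [Phi, PSComp_zero]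

lemma coeff_Phi_mem (I : Ideal R) (w : Fin q → R⟦X⟧)
    (hw : ∀ i n, coeff n (w i) ∈ I) (m : ℕ) : coeff m (Phi π q w) ∈ I := by
  rw [Phi, map_sum]
  refine Ideal.sum_mem _ fun i _ => ?_
  rw [coeff_X_pow_mul']
  split
  · exact coeff_PSComp_mem I _ (hw i) _
  · exact I.zero_mem

lemma map_gser :
    map (Ideal.Quotient.mk (Ideal.span {π})) (C π * X + X ^ q)
      = (X : (R ⧸ Ideal.span {π})⟦X⟧) ^ q := by
  have h0 : Ideal.Quotient.mk (Ideal.span {π}) π = 0 :=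
    Ideal.Quotient.eq_zero_iff_mem.2 (Ideal.mem_span_singleton_self π)
  have : (map (Ideal.Quotient.mk (Ideal.span {π}))) (C π * X + X ^ q)
      = C (Ideal.Quotient.mk (Ideal.span {π}) π) * X + X ^ q := by
    rw [map_add, map_mul, map_pow, PowerSeries.map_C, PowerSeries.map_X]
  rw [this, h0, map_zero, zero_mul, zero_add]

lemma map_Phi (v : Fin q → R⟦X⟧) :
    map (Ideal.Quotient.mk (Ideal.span {π})) (Phi π q v)
      = ∑ i : Fin q, (X : (R ⧸ Ideal.span {π})⟦X⟧) ^ (i : ℕ) *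
          PSComp (map (Ideal.Quotient.mk (Ideal.span {π})) (v i)) (X ^ q) := by
  rw [Phi, map_sum]
  refine Finset.sum_congr rfl fun i _ => ?_
  rw [map_mul, map_pow, PowerSeries.map_X, map_PSComp, map_gser]

lemma map_L (pr : R →+* (R ⧸ Ideal.span {π})) (h : R⟦X⟧) (i : Fin q) :
    map pr (L q h i) = L q (map pr h) i := by
  ext n; simp [L, coeff_mk, coeff_map]

lemma exists_div (c : R) (h : R⟦X⟧) (hd : ∀ n, coeff n h ∈ Ideal.span {c}) :
    ∃ u, h = C c * u := by
  choose u hu using fun n => Ideal.mem_span_singleton'.1 (hd n)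
  refine ⟨PowerSeries.mk u, ?_⟩
  ext n
  rw [coeff_C_mul, coeff_mk, mul_comm, hu n]

lemma step_div (hq : 0 < q) (h : R⟦X⟧) :
    ∃ h' : R⟦X⟧, h - Phi π q (L q h) = C π * h' := by
  apply exists_div
  intro n
  rw [← Ideal.Quotient.eq_zero_iff_mem]
  have hm : map (Ideal.Quotient.mk (Ideal.span {π})) (h - Phi π q (L q h)) = 0 := by
    rw [map_sub, map_Phi]
    have he : ∀ i : Fin q,
        map (Ideal.Quotient.mk (Ideal.span {π})) (L q h i)
          = L q (map (Ideal.Quotient.mk (Ideal.span {π})) h) i := map_L π q _ h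
    rw [Finset.sum_congr rfl fun i _ => by rw [he i]]
    rw [Psi_L hq, sub_self]
  have := congrArg (coeff n) hm
  simpa [coeff_map] using this

lemma Phi_eq_zero_imp [IsDomain R] (hπ0 : π ≠ 0) (hq : 0 < q)
    (hH : ∀ x : R, (∀ k, x ∈ Ideal.span {π ^ k}) → x = 0) :
    ∀ w : Fin q → R⟦X⟧, Phi π q w = 0 → ∀ i, w i = 0 := by
  have hCpi : (C π) ≠ 0 := fun h => hπ0 (by simpa using congrArg (coeff 0) h)
  have main : ∀ K : ℕ, ∀ w : Fin q → R⟦X⟧, Phi π q w = 0 →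
      ∀ (i : Fin q) (n : ℕ), coeff n (w i) ∈ Ideal.span {π ^ K} := by
    intro K
    induction K with
    | zero => intro w _ i n; simp [Ideal.span_singleton_one]
    | succ K ih =>
      intro w h0 i n
      have hmodw : ∀ (j : Fin q) (n : ℕ), coeff n (w j) ∈ Ideal.span {π} := by
        intro j n
        rw [← Ideal.Quotient.eq_zero_iff_mem]
        have hm : (∑ i : Fin q, (X : (R ⧸ Ideal.span {π})⟦X⟧) ^ (i : ℕ) *
            PSComp (map (Ideal.Quotient.mk (Ideal.span {π})) (w i)) (X ^ q)) = 0 := by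
          rw [← map_Phi, h0, map_zero]
        have hz := Psi_eq_zero hq _ hm j
        have := congrArg (coeff n) hz
        simpa [coeff_map] using this
      choose u hu using fun j : Fin q => exists_div π (w j) (hmodw j)
      have h0' : Phi π q (fun j => C π * u j) = 0 := by
        rw [← funext hu]; exact h0
      rw [Phi_C_mul] at h0'
      have hPhiu : Phi π q u = 0 := by
        rcases mul_eq_zero.1 h0' with h | h
        · exact absurd h hCpi
        · exact h
      rw [hu i, coeff_C_mul, Ideal.mem_span_singleton, pow_succ']
      exact mul_dvd_mul_left π (Ideal.mem_span_singleton.1 (ih u hPhiu i n))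
  intro w h0 i
  ext n
  have := hH _ (fun K => main K w h0 i n)
  simpa using this

theorem key [IsDomain R] (hπ0 : π ≠ 0) (hq : 0 < q)
    (hC : ∀ a : ℕ → R, (∀ k l, k ≤ l → a l - a k ∈ Ideal.span {π ^ k}) →
      ∃ s : R, ∀ k, s - a k ∈ Ideal.span {π ^ k})
    (hH : ∀ x : R, (∀ k, x ∈ Ideal.span {π ^ k}) → x = 0)
    (f : R⟦X⟧) :
    ∃! fi : Fin q → R⟦X⟧, f = Phi π q fi := by
  obtain ⟨hseq, hseq0, hstep⟩ : ∃ hseq : ℕ → R⟦X⟧, hseq 0 = f ∧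
      ∀ k, hseq k - Phi π q (L q (hseq k)) = C π * hseq (k+1) := by
    choose D hD using fun h : R⟦X⟧ => step_div π q hq h
    exact ⟨fun k => Nat.rec f (fun _ h => D h) k, rfl, fun k => hD _⟩
  set V : ℕ → Fin q → R⟦X⟧ := fun K i => ∑ k ∈ Finset.range K, C (π ^ k) * L q (hseq k) i
    with hV
  have tele : ∀ K, f - Phi π q (V K) = C (π ^ K) * hseq K := by
    intro K
    induction K with
    | zero =>
      have : V 0 = fun _ => 0 := funext fun i => by simp [hV]
      rw [this, Phi_zero, hseq0]
      simp
    | succ K ih =>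
      have hVs : V (K+1) = fun i => V K i + C (π ^ K) * L q (hseq K) i :=
        funext fun i => Finset.sum_range_succ _ K
      rw [hVs, Phi_add, Phi_C_mul]
      calc f - (Phi π q (V K) + C (π ^ K) * Phi π q (L q (hseq K)))
          = (f - Phi π q (V K)) - C (π ^ K) * Phi π q (L q (hseq K)) := by ring
        _ = C (π ^ K) * (hseq K - Phi π q (L q (hseq K))) := by rw [ih]; ring
        _ = C (π ^ K) * (C π * hseq (K+1)) := by rw [hstep K]
        _ = C (π ^ (K+1)) * hseq (K+1) := by rw [pow_succ, map_mul]; ring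
  have hcau : ∀ (i : Fin q) (n : ℕ), ∀ k l, k ≤ l →
      coeff n (V l i) - coeff n (V k i) ∈ Ideal.span {π ^ k} := by
    intro i n k l hkl
    have hsum : coeff n (V l i) - coeff n (V k i)
        = ∑ j ∈ Finset.Ico k l, π ^ j * coeff n (L q (hseq j) i) := by
      rw [eq_comm, Finset.sum_Ico_eq_sub _ hkl]
      have hVc : ∀ K, coeff n (V K i) = ∑ k ∈ Finset.range K, π ^ k * coeff n (L q (hseq k) i) := by
        intro K
        simp only [hV, map_sum, coeff_C_mul]
      rw [hVc, hVc]
    rw [hsum]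
    refine Ideal.sum_mem _ fun j hj => ?_
    rw [Ideal.mem_span_singleton]
    exact Dvd.dvd.mul_right (pow_dvd_pow π (Finset.mem_Ico.1 hj).1) _
  choose s hs using fun (i : Fin q) (n : ℕ) =>
    hC (fun K => coeff n (V K i)) (fun k l h => hcau i n k l h)
  set fi : Fin q → R⟦X⟧ := fun i => PowerSeries.mk (s i) with hfidef
  have hfi : f = Phi π q fi := by
    have hz : ∀ m, coeff m (f - Phi π q fi) = 0 := by
      intro m
      apply hH
      intro K
      have h1 : f - Phi π q fi
          = (C (π ^ K) * hseq K) + Phi π q (fun i => V K i - fi i) := by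
        rw [Phi_sub, ← tele K]; ring
      rw [h1, map_add, coeff_C_mul]
      refine Ideal.add_mem _ ?_ ?_
      · rw [Ideal.mem_span_singleton]; exact Dvd.intro _ rfl
      · refine coeff_Phi_mem π q _ _ ?_ m
        intro i n
        have h2 := neg_mem (hs i n K)
        rw [neg_sub] at h2
        rw [map_sub]
        simpa [hfidef, coeff_mk] using h2
    ext m
    have := hz m
    rw [map_sub, sub_eq_zero] at this
    exact this
  refine ⟨fi, hfi, ?_⟩
  intro y hy
  have h0 : Phi π q (fun i => y i - fi i) = 0 := by
    rw [Phi_sub, ← hy, ← hfi, sub_self]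
  have hz := Phi_eq_zero_imp π q hπ0 hq hH _ h0
  funext i
  exact sub_eq_zero.1 (hz i)

end Phi



/-- in a finite monoid some positive power of every element is idempotent -/
lemma pow_idem_of_finite {M : Type*} [Monoid M] [Finite M] (x : M) :
    ∃ m, 0 < m ∧ x ^ m * x ^ m = x ^ m := by
  obtain ⟨i, j, hne, hij⟩ := Finite.exists_ne_map_eq_of_infinite (fun k : ℕ => x ^ k)
  wlog hlt : i < j generalizing i j
  · exact this j i hne.symm hij.symm (by omega)
  set c := j - i with hc
  have hc1 : 0 < c := by omega
  have hstep : ∀ d, x ^ (i + d + c) = x ^ (i + d) := by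
    intro d
    have h1 : x ^ (i + d + c) = x ^ j * x ^ d := by rw [← pow_add]; congr 1; omega
    have h2 : x ^ (i + d) = x ^ i * x ^ d := by rw [← pow_add]
    rw [h1, h2, ← hij]
  have hiter : ∀ t d, x ^ (i + d + t * c) = x ^ (i + d) := by
    intro t
    induction t with
    | zero => intro d; simp
    | succ t ih =>
      intro d
      have he : i + d + (t + 1) * c = i + (d + c) + t * c := by ring
      rw [he, ih (d + c), ← add_assoc, hstep]
  have hlt2 : i < (i + 1) * c := by nlinarith
  refine ⟨(i + 1) * c, by positivity, ?_⟩
  rw [← pow_add]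
  have hd : (i + 1) * c + (i + 1) * c = i + ((i + 1) * c - i) + (i + 1) * c := by omega
  have hd2 : (i + 1) * c = i + ((i + 1) * c - i) := by omega
  rw [hd, hiter (i + 1) ((i + 1) * c - i), ← hd2]

section Complete

variable {R : Type*} [CommRing R] (c : R)
  (hC : ∀ a : ℕ → R, (∀ k l, k ≤ l → a l - a k ∈ Ideal.span {c ^ k}) →
      ∃ s, ∀ k, s - a k ∈ Ideal.span {c ^ k})
  (hH : ∀ x : R, (∀ k, x ∈ Ideal.span {c ^ k}) → x = 0)

include hC hH

lemma geom_unit (u : R) (hu : u ∈ Ideal.span {c}) : IsUnit (1 + u) := by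
  rw [Ideal.mem_span_singleton] at hu
  set a : ℕ → R := fun K => ∑ k ∈ Finset.range K, (-u) ^ k with ha
  have hdvd : ∀ k, (-u) ^ k ∈ Ideal.span {c ^ k} := by
    intro k
    rw [Ideal.mem_span_singleton, neg_pow]
    exact Dvd.dvd.mul_left (pow_dvd_pow_of_dvd hu k) _
  have hcau : ∀ k l, k ≤ l → a l - a k ∈ Ideal.span {c ^ k} := by
    intro k l hkl
    have : a l - a k = ∑ j ∈ Finset.Ico k l, (-u) ^ j := by
      rw [eq_comm, Finset.sum_Ico_eq_sub _ hkl]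
    rw [this]
    refine Ideal.sum_mem _ fun j hj => ?_
    have := hdvd j
    rw [Ideal.mem_span_singleton] at this ⊢
    exact dvd_trans (pow_dvd_pow c (Finset.mem_Ico.1 hj).1) this
  obtain ⟨s, hs⟩ := hC a hcau
  refine IsUnit.of_mul_eq_one s ?_
  have hz : ∀ K, (1 + u) * s - 1 ∈ Ideal.span {c ^ K} := by
    intro K
    have hgeom : (1 + u) * a K - 1 = - (-u) ^ K := by
      have h2 : a K * (-u - 1) = (-u) ^ K - 1 := geom_sum_mul (-u) K
      have h3 : (1 + u) * a K = -(a K * (-u - 1)) := by ring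
      rw [h3, h2]; ring
    have hsplit : (1 + u) * s - 1 = (1 + u) * (s - a K) + ((1 + u) * a K - 1) := by ring
    rw [hsplit, hgeom]
    exact Ideal.add_mem _ (Ideal.mul_mem_left _ _ (hs K)) (neg_mem (hdvd K))
  exact sub_eq_zero.1 (hH _ hz)

lemma newton_idem [IsDomain R] (x : R) (hx : x * x - x ∈ Ideal.span {c}) :
    x ∈ Ideal.span {c} ∨ x - 1 ∈ Ideal.span {c} := by
  -- Newton iteration
  set e : ℕ → R := fun k => Nat.rec x (fun _ a => 3 * a ^ 2 - 2 * a ^ 3) k with he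
  have he0 : e 0 = x := rfl
  have hes : ∀ k, e (k + 1) = 3 * (e k) ^ 2 - 2 * (e k) ^ 3 := fun k => rfl
  have ht : ∀ k, e k * e k - e k ∈ Ideal.span {c ^ (k + 1)} := by
    intro k
    induction k with
    | zero => simpa [he0, pow_one] using hx
    | succ k ih =>
      have hid : e (k+1) * e (k+1) - e (k+1)
          = (e k * e k - e k) ^ 2 * ((1 - 2 * e k) ^ 2 - 4) := by
        rw [hes k]; ring
      rw [hid, Ideal.mem_span_singleton]
      rw [Ideal.mem_span_singleton] at ih
      calc c ^ (k + 2) ∣ (c ^ (k+1)) ^ 2 := by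
            rw [← pow_mul]; exact pow_dvd_pow c (by omega)
        _ ∣ (e k * e k - e k) ^ 2 * ((1 - 2 * e k) ^ 2 - 4) :=
            Dvd.dvd.mul_right (pow_dvd_pow_of_dvd ih 2) _
  have hdiff : ∀ k, e (k + 1) - e k ∈ Ideal.span {c ^ (k + 1)} := by
    intro k
    have hid : e (k + 1) - e k = -(2 * e k - 1) * (e k * e k - e k) := by
      rw [hes k]; ring
    rw [hid]
    exact Ideal.mul_mem_left _ _ (ht k)
  have hcau : ∀ k l, k ≤ l → e l - e k ∈ Ideal.span {c ^ k} := by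
    intro k l hkl
    have htel : e l - e k = ∑ j ∈ Finset.Ico k l, (e (j + 1) - e j) := by
      rw [Finset.sum_Ico_eq_sub _ hkl, Finset.sum_range_sub, Finset.sum_range_sub]
      ring
    rw [htel]
    refine Ideal.sum_mem _ fun j hj => ?_
    have := hdiff j
    rw [Ideal.mem_span_singleton] at this ⊢
    have hjk := (Finset.mem_Ico.1 hj).1
    exact dvd_trans (pow_dvd_pow c (by omega)) this
  obtain ⟨s, hs⟩ := hC e hcau
  have hss : s * s - s = 0 := by
    apply hH
    intro K
    have hsplit : s * s - s
        = (s - e K) * (s + e K) + (e K * e K - e K) + (e K - s) := by ring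
    rw [hsplit]
    refine Ideal.add_mem _ (Ideal.add_mem _ ?_ ?_) ?_
    · exact Ideal.mul_mem_right _ _ (hs K)
    · have := ht K
      rw [Ideal.mem_span_singleton] at this ⊢
      exact dvd_trans (pow_dvd_pow c (by omega)) this
    · have := neg_mem (hs K); rwa [neg_sub] at this
  have hsx : s - x ∈ Ideal.span {c} := by
    have h1 := hs 1
    have h2 := hdiff 0
    have h3 : s - x = (s - e 1) + (e 1 - e 0) := by rw [he0]; ring
    rw [h3]
    refine Ideal.add_mem _ ?_ ?_
    · simpa [pow_one] using h1
    · simpa [pow_one] using h2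
  have : s * (s - 1) = 0 := by rw [← hss]; ring
  rcases mul_eq_zero.1 this with h | h
  · left
    rw [h] at hsx
    have hh : x = -(0 - x) := by ring
    rw [hh]
    exact neg_mem hsx
  · right
    have hs1 : s = 1 := by rwa [sub_eq_zero] at h
    rw [hs1] at hsx
    have hh : x - 1 = -(1 - x) := by ring
    rw [hh]
    exact neg_mem hsx

end Complete

section Padic

variable (p : ℕ) [Fact p.Prime] (F : Type*) [Field F] [Algebra ℚ_[p] F]
    [FiniteDimensional ℚ_[p] F] [Algebra ℤ_[p] F] [IsScalarTower ℤ_[p] ℚ_[p] F]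

theorem arith_main (π : ↥(integralClosure ℤ_[p] F)) (hπ : Irreducible π) :
    0 < Nat.card ((↥(integralClosure ℤ_[p] F)) ⧸ Ideal.span {π}) ∧
    (∀ a : ℕ → ↥(integralClosure ℤ_[p] F),
        (∀ k l, k ≤ l → a l - a k ∈ Ideal.span {π ^ k}) →
      ∃ s, ∀ k, s - a k ∈ Ideal.span {π ^ k}) ∧
    (∀ x : ↥(integralClosure ℤ_[p] F), (∀ k : ℕ, x ∈ Ideal.span {π ^ k}) → x = 0) := by
  haveI : CharZero F := charZero_of_injective_algebraMap (algebraMap ℚ_[p] F).injective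
  have hZF : Function.Injective (algebraMap ℤ_[p] F) := by
    rw [IsScalarTower.algebraMap_eq ℤ_[p] ℚ_[p] F]
    exact (algebraMap ℚ_[p] F).injective.comp (IsFractionRing.injective ℤ_[p] ℚ_[p])
  have halginj : Function.Injective (algebraMap ℤ_[p] (↥(integralClosure ℤ_[p] F))) := by
    intro x y h
    apply hZF
    rw [IsScalarTower.algebraMap_apply ℤ_[p] (↥(integralClosure ℤ_[p] F)) F,
      IsScalarTower.algebraMap_apply ℤ_[p] (↥(integralClosure ℤ_[p] F)) F, h]
  haveI : NoZeroSMulDivisors ℤ_[p] (↥(integralClosure ℤ_[p] F)) :=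
    ⟨fun {c x} h => by
      rw [Algebra.smul_def, mul_eq_zero] at h
      exact h.imp_left (fun h' => halginj (by rw [h', map_zero]))⟩
  haveI : Module.Finite ℤ_[p] (↥(integralClosure ℤ_[p] F)) :=
    IsIntegralClosure.finite ℤ_[p] ℚ_[p] F _
  haveI : IsNoetherianRing (↥(integralClosure ℤ_[p] F)) :=
    IsIntegralClosure.isNoetherianRing ℤ_[p] ℚ_[p] F _
  -- Krull intersection
  have hKrull : ∀ c : ↥(integralClosure ℤ_[p] F), ¬ IsUnit c →
      ∀ x, (∀ k : ℕ, x ∈ Ideal.span {c ^ k}) → x = 0 := by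
    intro c hc x hx
    have hne : Ideal.span {c} ≠ ⊤ := by
      intro h
      exact hc (Ideal.span_singleton_eq_top.1 h)
    have hbot := Ideal.iInf_pow_eq_bot_of_isDomain (I := Ideal.span {c}) hne
    have hmem : x ∈ (⨅ i : ℕ, Ideal.span {c} ^ i) := by
      rw [Submodule.mem_iInf]
      intro i
      rw [Ideal.span_singleton_pow]
      exact hx i
    rw [hbot] at hmem
    simpa using hmem
  set b := Module.Free.chooseBasis ℤ_[p] (↥(integralClosure ℤ_[p] F)) with hb
  -- membership in p-power ideals via coordinates
  have hmem : ∀ (k : ℕ) (x : ↥(integralClosure ℤ_[p] F)),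
      x ∈ Ideal.span {((p : ↥(integralClosure ℤ_[p] F)))^k} ↔
        ∀ j, b.repr x j ∈ Ideal.span {((p : ℤ_[p]))^k} := by
    intro k x
    have halg : ((p : ↥(integralClosure ℤ_[p] F)))^k
        = algebraMap ℤ_[p] _ (((p : ℤ_[p]))^k) := by
      rw [map_pow, map_natCast]
    constructor
    · intro hx
      obtain ⟨y, hy⟩ := Ideal.mem_span_singleton'.1 hx
      intro j
      rw [Ideal.mem_span_singleton']
      refine ⟨b.repr y j, ?_⟩
      have hxy : x = ((p : ℤ_[p])^k) • y := by
        rw [← hy, halg, Algebra.smul_def, mul_comm]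
      rw [hxy, map_smul]
      simp [Finsupp.smul_apply, smul_eq_mul, mul_comm]
    · intro hj
      choose cf hcf using fun j => Ideal.mem_span_singleton'.1 (hj j)
      rw [Ideal.mem_span_singleton']
      refine ⟨∑ j, cf j • b j, ?_⟩
      have h1 : (∑ j, cf j • b j) * ((p : ↥(integralClosure ℤ_[p] F)))^k
          = ∑ j, (cf j * (p:ℤ_[p])^k) • b j := by
        rw [halg, mul_comm, ← Algebra.smul_def, Finset.smul_sum]
        refine Finset.sum_congr rfl fun j _ => ?_
        rw [smul_smul, mul_comm]
      rw [h1]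
      rw [Finset.sum_congr rfl fun j _ => by rw [hcf j]]
      exact b.sum_repr x
  -- p-adic completeness of the integral closure
  have hCp : ∀ a : ℕ → ↥(integralClosure ℤ_[p] F),
      (∀ k l, k ≤ l → a l - a k ∈ Ideal.span {((p : ↥(integralClosure ℤ_[p] F)))^k}) →
      ∃ s, ∀ k, s - a k ∈ Ideal.span {((p : ↥(integralClosure ℤ_[p] F)))^k} := by
    intro a ha
    have hZ : ∀ j, ∃ Lj : ℤ_[p], ∀ k, Lj - b.repr (a k) j ∈ Ideal.span {((p:ℤ_[p]))^k} := by
      intro j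
      have hcauj : ∀ {m n : ℕ}, m ≤ n → (fun k => b.repr (a k) j) m ≡ (fun k => b.repr (a k) j) n
          [SMOD ((IsLocalRing.maximalIdeal ℤ_[p]) ^ m • ⊤ : Submodule ℤ_[p] ℤ_[p])] := by
        intro m n hmn
        rw [SModEq.sub_mem]
        have h1 := (hmem m (a n - a m)).1 ((ha m n hmn))
        have h2 := h1 j
        rw [map_sub, Finsupp.sub_apply] at h2
        have h3 := neg_mem h2
        rw [neg_sub] at h3
        simpa [← Ideal.one_eq_top, smul_eq_mul, mul_one, PadicInt.maximalIdeal_eq_span_p,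
          Ideal.span_singleton_pow] using h3
      obtain ⟨L, hL⟩ := IsPrecomplete.prec
        (inferInstance : IsPrecomplete (IsLocalRing.maximalIdeal ℤ_[p]) ℤ_[p]) hcauj
      refine ⟨L, fun k => ?_⟩
      have h1 := hL k
      rw [SModEq.sub_mem] at h1
      have h2 := neg_mem h1
      rw [neg_sub] at h2
      simpa [← Ideal.one_eq_top, smul_eq_mul, mul_one, PadicInt.maximalIdeal_eq_span_p,
        Ideal.span_singleton_pow] using h2
    choose Lf hLf using hZ
    refine ⟨b.repr.symm (Finsupp.equivFunOnFinite.symm Lf), fun k => ?_⟩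
    rw [hmem k]
    intro j
    rw [map_sub]
    have hrepr : b.repr (b.repr.symm (Finsupp.equivFunOnFinite.symm Lf)) j = Lf j := by
      simp
    rw [Finsupp.sub_apply, hrepr]
    exact hLf j k
  -- finiteness of quotients by powers of p
  have hfin : ∀ m : ℕ, Finite ((↥(integralClosure ℤ_[p] F)) ⧸
      Ideal.span {((p : ↥(integralClosure ℤ_[p] F)))^m}) := by
    intro m
    haveI : NeZero (p ^ m) := ⟨pow_ne_zero m (Fact.out (p := p.Prime)).ne_zero⟩
    refine Finite.of_surjective
      (fun z : (Module.Free.ChooseBasisIndex ℤ_[p] (↥(integralClosure ℤ_[p] F)) → ZMod (p^m)) =>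
        Ideal.Quotient.mk _ (∑ j, (((z j).val : ℤ_[p])) • b j)) ?_
    intro x
    obtain ⟨x, rfl⟩ := Ideal.Quotient.mk_surjective x
    refine ⟨fun j => PadicInt.toZModPow m (b.repr x j), ?_⟩
    rw [Ideal.Quotient.eq]
    rw [hmem m]
    intro j
    rw [map_sub]
    have hco : b.repr (∑ j', ((((PadicInt.toZModPow m (b.repr x j')).val : ℤ_[p]))) • b j') j
        = (((PadicInt.toZModPow m (b.repr x j)).val : ℤ_[p])) := by
      rw [map_sum]
      rw [Finset.sum_congr rfl fun j' _ => by rw [map_smul]]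
      simp [Module.Basis.repr_self, Finsupp.single_apply]
    rw [Finsupp.sub_apply, hco]
    rw [← PadicInt.ker_toZModPow, RingHom.mem_ker, map_sub]
    rw [map_natCast]
    rw [ZMod.natCast_val, ZMod.cast_id, sub_self]
  -- p is not a unit
  have hpF : ¬ IsUnit ((p : ↥(integralClosure ℤ_[p] F))) := by
    intro h
    obtain ⟨w, hw⟩ := h.exists_right_inv
    have hwint : IsIntegral ℤ_[p] (w : F) := w.2
    have hpw : (p : F) * (w : F) = 1 := by
      have := congrArg (Subtype.val) hw
      push_cast at this
      exact_mod_cast this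
    have hwp : (w : F) = algebraMap ℚ_[p] F (((p : ℚ_[p]))⁻¹) := by
      rw [map_inv₀, map_natCast]
      exact eq_inv_of_mul_eq_one_left (by rw [mul_comm]; exact hpw)
    rw [hwp] at hwint
    rw [isIntegral_algebraMap_iff (algebraMap ℚ_[p] F).injective] at hwint
    obtain ⟨z, hz⟩ := IsIntegrallyClosed.isIntegral_iff.1 hwint
    have hz1 : (p : ℤ_[p]) * z = 1 := by
      apply IsFractionRing.injective ℤ_[p] ℚ_[p]
      rw [map_mul, map_one, hz, map_natCast]
      exact mul_inv_cancel₀ (Nat.cast_ne_zero.2 (Fact.out (p := p.Prime)).ne_zero)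
    exact (mem_nonunits_iff.1 (PadicInt.p_nonunit (p := p))) (IsUnit.of_mul_eq_one z hz1)
  have hHp := hKrull _ hpF
  -- a power of p lies in the ideal generated by π
  have hπ0 : π ≠ 0 := hπ.ne_zero
  haveI : Algebra.IsIntegral ℤ_[p] (↥(integralClosure ℤ_[p] F)) :=
    Algebra.IsIntegral.of_finite _ _
  have hint : IsIntegral ℤ_[p] π := Algebra.IsIntegral.isIntegral π
  have hpv : ∃ v : ℕ, ((p : ↥(integralClosure ℤ_[p] F)))^v ∈ Ideal.span {π} := by
    have hPmonic : (minpoly ℤ_[p] π).Monic := minpoly.monic hint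
    have haev : (Polynomial.aeval π) (minpoly ℤ_[p] π) = 0 := minpoly.aeval _ _
    have hc0 : (minpoly ℤ_[p] π).coeff 0 ≠ 0 := by
      intro h0
      have hPX : Polynomial.X * (minpoly ℤ_[p] π).divX = minpoly ℤ_[p] π := by
        have h1 := Polynomial.X_mul_divX_add (minpoly ℤ_[p] π)
        rw [h0] at h1
        simpa using h1
      have haev2 : π * (Polynomial.aeval π) (minpoly ℤ_[p] π).divX = 0 := by
        have := congrArg (Polynomial.aeval π) hPX
        rw [map_mul, Polynomial.aeval_X, haev] at this
        exact this
      have hdx0 : (Polynomial.aeval π) (minpoly ℤ_[p] π).divX = 0 := by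
        rcases mul_eq_zero.1 haev2 with h | h
        · exact absurd h hπ0
        · exact h
      have hdeg : 0 < (minpoly ℤ_[p] π).natDegree := minpoly.natDegree_pos hint
      have hmono : ((minpoly ℤ_[p] π).divX).Monic := by
        unfold Polynomial.Monic Polynomial.leadingCoeff
        rw [Polynomial.natDegree_divX_eq_natDegree_tsub_one, Polynomial.coeff_divX]
        have he : (minpoly ℤ_[p] π).natDegree - 1 + 1 = (minpoly ℤ_[p] π).natDegree := by omega
        rw [he]
        exact hPmonic
      have hmin := minpoly.min ℤ_[p] π hmono hdx0
      have hlt := Polynomial.degree_divX_lt (hPmonic.ne_zero)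
      exact absurd (lt_of_le_of_lt hmin hlt) (lt_irrefl _)
    have hc0mem : algebraMap ℤ_[p] (↥(integralClosure ℤ_[p] F)) ((minpoly ℤ_[p] π).coeff 0)
        ∈ Ideal.span {π} := by
      have hsplit := Polynomial.X_mul_divX_add (minpoly ℤ_[p] π)
      have h2 := congrArg (Polynomial.aeval π) hsplit
      rw [map_add, map_mul, Polynomial.aeval_X, Polynomial.aeval_C, haev] at h2
      rw [Ideal.mem_span_singleton']
      refine ⟨-((Polynomial.aeval π) (minpoly ℤ_[p] π).divX), ?_⟩
      have : π * (Polynomial.aeval π) (minpoly ℤ_[p] π).divX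
          + algebraMap ℤ_[p] _ ((minpoly ℤ_[p] π).coeff 0) = 0 := h2
      linear_combination -this
    refine ⟨((minpoly ℤ_[p] π).coeff 0).valuation, ?_⟩
    have hspec := PadicInt.unitCoeff_spec hc0
    have : ((p : ↥(integralClosure ℤ_[p] F)))^(((minpoly ℤ_[p] π).coeff 0).valuation)
        = algebraMap ℤ_[p] _ (((PadicInt.unitCoeff hc0)⁻¹ : ℤ_[p]ˣ) : ℤ_[p])
          * algebraMap ℤ_[p] _ ((minpoly ℤ_[p] π).coeff 0) := by
      rw [← map_mul]
      have : ((((PadicInt.unitCoeff hc0)⁻¹ : ℤ_[p]ˣ)) : ℤ_[p]) * ((minpoly ℤ_[p] π).coeff 0)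
          = ((p:ℤ_[p]))^(((minpoly ℤ_[p] π).coeff 0).valuation) := by
        calc (((PadicInt.unitCoeff hc0)⁻¹ : ℤ_[p]ˣ) : ℤ_[p]) * ((minpoly ℤ_[p] π).coeff 0)
            = (((PadicInt.unitCoeff hc0)⁻¹ : ℤ_[p]ˣ) : ℤ_[p]) *
                (((PadicInt.unitCoeff hc0 : ℤ_[p]ˣ)) * ((p:ℤ_[p]))^(((minpoly ℤ_[p] π).coeff 0).valuation)) :=
              congrArg _ hspec
          _ = ((p:ℤ_[p]))^(((minpoly ℤ_[p] π).coeff 0).valuation) := by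
              rw [← mul_assoc, ← Units.val_mul]
              first
              | rw [inv_mul_cancel, Units.val_one, one_mul]
              | rw [inv_mul_self, Units.val_one, one_mul]
      rw [this, map_pow, map_natCast]
    rw [this]
    exact Ideal.mul_mem_left _ _ hc0mem
  -- a power of π lies in the ideal generated by p
  have hπp : ∃ m : ℕ, 0 < m ∧ (π^m) ∈ Ideal.span {((p : ↥(integralClosure ℤ_[p] F)))} := by
    haveI hf1 : Finite ((↥(integralClosure ℤ_[p] F)) ⧸
        Ideal.span {((p : ↥(integralClosure ℤ_[p] F)))}) := by
      have := hfin 1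
      simpa [pow_one] using this
    obtain ⟨m, hm, hidem⟩ := pow_idem_of_finite
      (Ideal.Quotient.mk (Ideal.span {((p : ↥(integralClosure ℤ_[p] F)))}) π)
    have hxx : (π ^ m) * (π ^ m) - π ^ m
        ∈ Ideal.span {((p : ↥(integralClosure ℤ_[p] F)))} := by
      rw [← Ideal.Quotient.eq]
      rw [map_mul, map_pow]
      exact hidem
    have hCp1 : ∀ a : ℕ → ↥(integralClosure ℤ_[p] F),
        (∀ k l, k ≤ l → a l - a k ∈ Ideal.span {((p : ↥(integralClosure ℤ_[p] F)))^k}) →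
        ∃ s, ∀ k, s - a k ∈ Ideal.span {((p : ↥(integralClosure ℤ_[p] F)))^k} := hCp
    rcases newton_idem _ hCp1 hHp (π^m) hxx with h | h
    · exact ⟨m, hm, h⟩
    · exfalso
      have hunit : IsUnit ((1 : ↥(integralClosure ℤ_[p] F)) + (π^m - 1)) :=
        geom_unit _ hCp1 hHp _ h
      rw [add_sub_cancel] at hunit
      exact hπ.not_isUnit ((isUnit_pow_iff hm.ne').1 hunit)
  -- now assemble the three conclusions
  obtain ⟨m, hm0, hmp⟩ := hπp
  obtain ⟨v, hv⟩ := hpv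
  refine ⟨?_, ?_, hKrull π hπ.not_isUnit⟩
  · -- positivity of the cardinality
    haveI : Finite ((↥(integralClosure ℤ_[p] F)) ⧸ Ideal.span {π}) := by
      haveI := hfin v
      have hle : Ideal.span {((p : ↥(integralClosure ℤ_[p] F)))^v} ≤ Ideal.span {π} := by
        rw [Ideal.span_singleton_le_span_singleton]
        exact Ideal.mem_span_singleton.1 hv
      refine Finite.of_surjective (Ideal.Quotient.factor hle) ?_
      intro x
      obtain ⟨y, rfl⟩ := Ideal.Quotient.mk_surjective x
      exact ⟨Ideal.Quotient.mk _ y, Ideal.Quotient.factor_mk hle y⟩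
    exact Nat.card_pos
  · -- completeness for the π-adic filtration
    intro a ha
    have hcau2 : ∀ k l, k ≤ l → (fun k => a (m * k)) l - (fun k => a (m * k)) k
        ∈ Ideal.span {((p : ↥(integralClosure ℤ_[p] F)))^k} := by
      intro k l hkl
      have h5 := ha (m * k) (m * l) (Nat.mul_le_mul_left m hkl)
      have hle : Ideal.span {π ^ (m*k)}
          ≤ Ideal.span {((p : ↥(integralClosure ℤ_[p] F)))^k} := by
        rw [Ideal.span_singleton_le_span_singleton]
        obtain ⟨t, ht⟩ := Ideal.mem_span_singleton.1 hmp
        have he : π^(m*k) = (((p : ↥(integralClosure ℤ_[p] F))) * t)^k := by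
          rw [← ht, ← pow_mul]
        rw [he, mul_pow]
        exact Dvd.intro _ rfl
      exact hle h5
    obtain ⟨s, hsp⟩ := hCp (fun k => a (m * k)) hcau2
    refine ⟨s, fun K => ?_⟩
    have h1 : s - a (m * ((v+1) * K))
        ∈ Ideal.span {((p : ↥(integralClosure ℤ_[p] F)))^((v+1)*K)} := hsp ((v+1)*K)
    have h2 : a (m * ((v+1)*K)) - a K ∈ Ideal.span {π ^ K} := by
      apply ha K
      calc K ≤ (v+1)*K := Nat.le_mul_of_pos_left K (by omega)
        _ ≤ m * ((v+1)*K) := Nat.le_mul_of_pos_left _ hm0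
    have h3 : Ideal.span {((p : ↥(integralClosure ℤ_[p] F)))^((v+1)*K)}
        ≤ Ideal.span {π ^ K} := by
      rw [Ideal.span_singleton_le_span_singleton]
      obtain ⟨t, ht⟩ := Ideal.mem_span_singleton.1 hv
      have he : ((p : ↥(integralClosure ℤ_[p] F)))^((v+1)*K)
          = (π * t)^K * ((p : ↥(integralClosure ℤ_[p] F)))^K := by
        rw [← ht, ← pow_mul]
        rw [← pow_add]
        congr 1
        ring
      rw [he, mul_pow, mul_assoc]
      exact Dvd.intro _ rfl
    have h4 := Ideal.add_mem _ (h3 h1) h2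
    simpa using h4

end Padic


end LTAux

/-- With `φ(f)(X) = f(πX + X^q)`, the ring `o_F[[X]]` is free over `φ(o_F[[X]])`
with basis `1, X, …, X^(q-1)`: every `f` is uniquely `∑ i, X^i φ(f_i)`. -/
theorem stmt7 (p : ℕ) [Fact p.Prime] (F : Type*) [Field F] [Algebra ℚ_[p] F]
    [FiniteDimensional ℚ_[p] F] [Algebra ℤ_[p] F] [IsScalarTower ℤ_[p] ℚ_[p] F]
    (O : Subalgebra ℤ_[p] F) (hO : O = integralClosure ℤ_[p] F)
    (π : ↥O) (hπ : Irreducible π) (q : ℕ)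
    (hq : Nat.card (↥O ⧸ Ideal.span {π}) = q) :
    ∀ f : PowerSeries ↥O, ∃! fi : Fin q → PowerSeries ↥O,
      f = ∑ i : Fin q, PowerSeries.X ^ (i : ℕ) *
        PSComp (fi i) (PowerSeries.C (R := ↥O) π * PowerSeries.X + PowerSeries.X ^ q) := by
  subst hO
  intro f
  obtain ⟨hqpos, hC, hH⟩ := LTAux.arith_main p F π hπ
  have hq0 : 0 < q := hq ▸ hqpos
  exact LTAux.key π q hπ.ne_zero hq0 hC hH f
end

section
/- Let $F$ be a finite extension of $\mathbf{Q}_p$ with ring of integers $o_F$, uniformizer $p$, residue cardinality $q = p^2$ (e.g. $F = \mathbf{Q}_{p^2}$), and Lubin--Tate group with $[p](X) = pX + X^q$. Then $o_F[[X]]^{\psi = 0} = \left(\bigoplus_{i=1}^{q-2} X^i\,\phi(o_F[[X]])\right) \oplus \left(pX^{q-1} - (1-q)\right)\phi(o_F[[X]])$. -/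
open PowerSeries

namespace Stmt8

open Finset

variable {R : Type*} [CommRing R]

theorem coeff_psComp (f g : R⟦X⟧) (m : ℕ) :
    (coeff (R := R)) m (PSComp f g) = ∑ n ∈ range (m + 1), (coeff (R := R)) m ((C (R := R)) ((coeff (R := R)) n f) * g ^ n) :=
  coeff_mk _ _

theorem coeff_C_mul_pow_eq_zero {g : R⟦X⟧} (hg : (constantCoeff (R := R)) g = 0) (a : R) {m n : ℕ}
    (h : m < n) : (coeff (R := R)) m ((C (R := R)) a * g ^ n) = 0 := by
  have hd : (X : R⟦X⟧) ^ n ∣ (C (R := R)) a * g ^ n :=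
    Dvd.dvd.mul_left (pow_dvd_pow_of_dvd (X_dvd_iff.2 hg) n) _
  exact (X_pow_dvd_iff.1 hd) m h

theorem coeff_psComp' (f g : R⟦X⟧) (hg : (constantCoeff (R := R)) g = 0) {m N : ℕ} (hN : m < N) :
    (coeff (R := R)) m (PSComp f g) = ∑ n ∈ range N, (coeff (R := R)) m ((C (R := R)) ((coeff (R := R)) n f) * g ^ n) := by
  rw [coeff_psComp]
  apply Finset.sum_subset (Finset.range_subset_range.2 hN)
  intro n _ hn'
  simp only [mem_range, not_lt] at hn'
  exact coeff_C_mul_pow_eq_zero hg _ (by omega)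

theorem psComp_add (f₁ f₂ g : R⟦X⟧) : PSComp (f₁ + f₂) g = PSComp f₁ g + PSComp f₂ g := by
  ext m
  simp [coeff_psComp, map_add, add_mul, Finset.sum_add_distrib]

theorem psComp_C_mul (a : R) (f g : R⟦X⟧) : PSComp ((C (R := R)) a * f) g = (C (R := R)) a * PSComp f g := by
  ext m
  simp [coeff_psComp, map_mul, mul_assoc, Finset.mul_sum, coeff_C_mul]

theorem psComp_zero (g : R⟦X⟧) : PSComp 0 g = 0 := by
  ext m; simp [coeff_psComp]

theorem psComp_sub (f₁ f₂ g : R⟦X⟧) : PSComp (f₁ - f₂) g = PSComp f₁ g - PSComp f₂ g := by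
  ext m
  simp [coeff_psComp, map_sub, sub_mul, Finset.sum_sub_distrib]

theorem psComp_neg (f g : R⟦X⟧) : PSComp (-f) g = -PSComp f g := by
  have := psComp_sub 0 f g
  simpa [psComp_zero] using this

theorem psComp_one (g : R⟦X⟧) : PSComp 1 g = 1 := by
  ext m
  rw [coeff_psComp, Finset.sum_range_succ']
  simp [coeff_one]

theorem psComp_X_mul (f g : R⟦X⟧) (hg : (constantCoeff (R := R)) g = 0) :
    PSComp (X * f) g = g * PSComp f g := by
  ext m
  rw [coeff_psComp, Finset.sum_range_succ']
  have h0 : (coeff (R := R)) m ((C (R := R)) ((coeff (R := R)) 0 (X * f)) * g ^ 0) = 0 := by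
    simp [coeff_zero_eq_constantCoeff, map_mul]
  rw [h0, add_zero]
  simp only [coeff_succ_X_mul]
  -- RHS
  have hP : (coeff (R := R)) m (g * PSComp f g) =
      (coeff (R := R)) m (g * ∑ n ∈ range (m + 1), (C (R := R)) ((coeff (R := R)) n f) * g ^ n) := by
    rw [coeff_mul, coeff_mul]
    refine Finset.sum_congr rfl fun x hx => ?_
    rw [Finset.HasAntidiagonal.mem_antidiagonal] at hx
    congr 1
    rw [coeff_psComp' f g hg (show x.2 < m + 1 by omega), map_sum]
  rw [hP, Finset.mul_sum, map_sum]
  have : ∀ n ∈ range (m + 1), (coeff (R := R)) m (g * ((C (R := R)) ((coeff (R := R)) n f) * g ^ n)) =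
      (coeff (R := R)) m ((C (R := R)) ((coeff (R := R)) n f) * g ^ (n + 1)) := by
    intro n _
    congr 1; ring
  rw [Finset.sum_congr rfl this, Finset.sum_range_succ,
    coeff_C_mul_pow_eq_zero hg _ (Nat.lt_succ_self m), add_zero]

theorem psComp_X_pow_mul (k : ℕ) (f g : R⟦X⟧) (hg : (constantCoeff (R := R)) g = 0) :
    PSComp (X ^ k * f) g = g ^ k * PSComp f g := by
  induction k with
  | zero => simp
  | succ k ih =>
    have : (X : R⟦X⟧) ^ (k + 1) * f = X * (X ^ k * f) := by ring
    rw [this, psComp_X_mul _ _ hg, ih]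
    ring

theorem psComp_X (g : R⟦X⟧) (hg : (constantCoeff (R := R)) g = 0) : PSComp X g = g := by
  have := psComp_X_mul 1 g hg
  simpa [psComp_one] using this

/-- the substitution series `πX + X^q` -/
noncomputable def sps (π : R) (q : ℕ) : R⟦X⟧ := (C (R := R)) π * X + X ^ q

theorem constantCoeff_sps (π : R) {q : ℕ} (hq : 0 < q) : (constantCoeff (R := R)) (sps π q) = 0 := by
  simp [sps, map_pow, zero_pow hq.ne']

theorem sps_pow (π : R) (q : ℕ) (n : ℕ) : ∃ t, sps π q ^ n = X ^ (q * n) + (C (R := R)) π * t := by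
  induction n with
  | zero => exact ⟨0, by simp⟩
  | succ n ih =>
    obtain ⟨t, ht⟩ := ih
    refine ⟨X * X ^ (q * n) + (C (R := R)) π * (X * t) + X ^ q * t, ?_⟩
    rw [pow_succ, ht, sps, show q * (n + 1) = q * n + q by ring, pow_add]
    ring

theorem coeff_psComp_sps (π : R) {q : ℕ} (hq : 0 < q) (f : R⟦X⟧) (m : ℕ) :
    ∃ r, (coeff (R := R)) m (PSComp f (sps π q)) =
      (if q ∣ m then (coeff (R := R)) (m / q) f else 0) + π * r := by
  choose t ht using sps_pow π q
  refine ⟨∑ n ∈ range (m + 1), (coeff (R := R)) n f * (coeff (R := R)) m (t n), ?_⟩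
  rw [coeff_psComp]
  have hterm : ∀ n ∈ range (m + 1),
      (coeff (R := R)) m ((C (R := R)) ((coeff (R := R)) n f) * sps π q ^ n) =
        (if m = q * n then (coeff (R := R)) n f else 0) + π * ((coeff (R := R)) n f * (coeff (R := R)) m (t n)) := by
    intro n _
    rw [ht n, mul_add, map_add, ← mul_assoc, ← map_mul, coeff_C_mul, coeff_C_mul, coeff_X_pow]
    split_ifs <;> ring
  rw [Finset.sum_congr rfl hterm, Finset.sum_add_distrib, Finset.mul_sum]
  congr 1
  by_cases hd : q ∣ m
  · obtain ⟨k, rfl⟩ := hd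
    rw [if_pos (dvd_mul_right q k), Nat.mul_div_cancel_left k hq]
    rw [Finset.sum_eq_single k]
    · simp
    · intro n _ hn
      rw [if_neg]
      exact fun h => hn (Nat.eq_of_mul_eq_mul_left hq h.symm)
    · intro hk
      exact absurd (mem_range.2 (by nlinarith [Nat.le_mul_of_pos_left k hq])) hk
  · rw [if_neg hd]
    apply Finset.sum_eq_zero
    intro n _
    rw [if_neg]
    exact fun h => hd ⟨n, h⟩

/-- the map `g ↦ ∑_{i<q} X^i · (g i)(s)` -/
noncomputable def Umap (π : R) (q : ℕ) (g : ℕ → R⟦X⟧) : R⟦X⟧ :=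
  ∑ i ∈ range q, X ^ i * PSComp (g i) (sps π q)

theorem dvd_of_umap_eq_zero (π : R) {q : ℕ} (hq : 0 < q) {g : ℕ → R⟦X⟧}
    (hU : Umap π q g = 0) {i : ℕ} (hi : i < q) (m : ℕ) : π ∣ (coeff (R := R)) m (g i) := by
  have h0 : (coeff (R := R)) (i + q * m) (Umap π q g) = 0 := by rw [hU]; simp
  set M := i + q * m with hM
  rw [Umap, map_sum] at h0
  have key : ∀ j : ℕ, ∃ r, j < q → (coeff (R := R)) M (X ^ j * PSComp (g j) (sps π q)) =
      (if j = i then (coeff (R := R)) m (g i) else 0) + π * r := by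
    intro j
    by_cases hj : j < q
    swap
    · exact ⟨0, fun h => absurd h hj⟩
    by_cases hji : j = i
    · subst hji
      obtain ⟨r, hr⟩ := coeff_psComp_sps π hq (g j) (M - j)
      refine ⟨r, fun _ => ?_⟩
      rw [coeff_X_pow_mul', if_pos (by omega : j ≤ M), hr, if_pos rfl]
      have h1 : M - j = q * m := by omega
      rw [h1, if_pos (dvd_mul_right q m), Nat.mul_div_cancel_left m hq]
    · by_cases hjM : j ≤ M
      · obtain ⟨r, hr⟩ := coeff_psComp_sps π hq (g j) (M - j)
        refine ⟨r, fun _ => ?_⟩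
        rw [coeff_X_pow_mul', if_pos hjM, hr, if_neg, if_neg hji, zero_add]
        rintro ⟨c, hc⟩
        have he : i + q * m = j + q * c := by omega
        have hmod : i % q = j % q := by
          calc i % q = (i + q * m) % q := (Nat.add_mul_mod_self_left i q m).symm
          _ = (j + q * c) % q := by rw [he]
          _ = j % q := Nat.add_mul_mod_self_left j q c
        rw [Nat.mod_eq_of_lt hi, Nat.mod_eq_of_lt hj] at hmod
        exact hji hmod.symm
      · exact ⟨0, fun _ => by rw [coeff_X_pow_mul', if_neg hjM, if_neg hji]; ring⟩
  choose r hr using key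
  rw [Finset.sum_congr rfl (fun j hj => hr j (mem_range.1 hj)), Finset.sum_add_distrib,
    Finset.sum_ite_eq' (range q) i, if_pos (mem_range.2 hi)] at h0
  rw [← Finset.mul_sum] at h0
  exact ⟨-∑ j ∈ range q, r j, by linear_combination h0⟩


theorem pow_dvd_of_umap_eq_zero [IsDomain R] (π : R) (hπ0 : π ≠ 0) {q : ℕ} (hq : 0 < q) :
    ∀ (n : ℕ) (g : ℕ → R⟦X⟧), Umap π q g = 0 → ∀ i < q, ∀ m, π ^ n ∣ (coeff (R := R)) m (g i) := by
  intro n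
  induction n with
  | zero => intro g _ i _ m; simpa using one_dvd (((coeff (R := R)) m) (g i))
  | succ n ih =>
    classical
    intro g hU i hi m
    have hdvd : ∀ j < q, ∀ m', π ∣ (coeff (R := R)) m' (g j) := fun j hj m' =>
      dvd_of_umap_eq_zero π hq hU hj m'
    set h : ℕ → R⟦X⟧ := fun j => PowerSeries.mk fun m' =>
      if hd : π ∣ (coeff (R := R)) m' (g j) then hd.choose else 0 with hh
    have hgh : ∀ j < q, g j = (C (R := R)) π * h j := by
      intro j hj
      ext m'
      rw [coeff_C_mul, hh]
      simp only [coeff_mk]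
      rw [dif_pos (hdvd j hj m')]
      exact (hdvd j hj m').choose_spec
    have hUh : Umap π q h = 0 := by
      have : Umap π q g = (C (R := R)) π * Umap π q h := by
        rw [Umap, Umap, Finset.mul_sum]
        refine Finset.sum_congr rfl fun j hj => ?_
        rw [hgh j (mem_range.1 hj), psComp_C_mul]
        ring
      rw [this] at hU
      rcases mul_eq_zero.1 hU with hc | hc
      · exact absurd (by simpa using congrArg ((constantCoeff (R := R))) hc) hπ0
      · exact hc
    obtain ⟨c, hc⟩ := ih h hUh i hi m
    refine ⟨c, ?_⟩
    rw [hgh i hi, coeff_C_mul, hc, pow_succ]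
    ring

theorem umap_inj [IsDomain R] (π : R) (hπ0 : π ≠ 0) {q : ℕ} (hq : 0 < q)
    (hsep : ∀ x : R, (∀ n, π ^ n ∣ x) → x = 0) {g h : ℕ → R⟦X⟧}
    (hgh : Umap π q g = Umap π q h) : ∀ i < q, g i = h i := by
  have hz : Umap π q (fun j => g j - h j) = 0 := by
    rw [Umap]
    have : ∀ j ∈ range q, X ^ j * PSComp (g j - h j) (sps π q) =
        X ^ j * PSComp (g j) (sps π q) - X ^ j * PSComp (h j) (sps π q) := by
      intro j _
      rw [psComp_sub]
      ring
    rw [Finset.sum_congr rfl this, Finset.sum_sub_distrib, ← Umap, ← Umap, hgh, sub_self]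
  intro i hi
  have : ∀ m, (coeff (R := R)) m (g i - h i) = 0 := fun m =>
    hsep _ fun n => pow_dvd_of_umap_eq_zero π hπ0 hq n _ hz i hi m
  have : g i - h i = 0 := by ext m; simpa using this m
  exact sub_eq_zero.1 this


theorem sum_ite_lt {M : Type*} [AddCommMonoid M] {t Q : ℕ} (h : t ≤ Q) (F : ℕ → M) :
    ∑ k ∈ range Q, (if k < t then F k else 0) = ∑ k ∈ range t, F k := by
  rw [← Finset.sum_subset (Finset.range_subset_range.2 h)
    (fun x _ hx => by rw [if_neg (by simpa using hx)])]
  exact Finset.sum_congr rfl fun k hk => if_pos (mem_range.1 hk)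

theorem sum_ite_le {M : Type*} [AddCommMonoid M] {t Q : ℕ} (h : t ≤ Q) (F : ℕ → M) :
    ∑ k ∈ range Q, (if t ≤ k then F k else 0) = ∑ j ∈ range (Q - t), F (t + j) := by
  have h1 : ∑ k ∈ range Q, (if t ≤ k then F k else 0) = ∑ k ∈ Ico t Q, F k := by
    rw [Finset.range_eq_Ico, ← Finset.sum_Ico_consecutive _ (Nat.zero_le t) h,
      Finset.sum_eq_zero (fun k hk => if_neg (by simp only [mem_Ico] at hk; omega)), zero_add]
    exact Finset.sum_congr rfl fun k hk => if_pos (by simp only [mem_Ico] at hk; omega)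
  rw [h1, Finset.sum_Ico_eq_sum_range]

/-- the effect of multiplication by `X^i` on coordinates -/
noncomputable def Emap (π : R) (q i : ℕ) (g : ℕ → R⟦X⟧) : ℕ → R⟦X⟧ := fun k =>
  (if i ≤ k then g (k - i) else 0) + (if k < i then X * g (k + q - i) else 0)
    + (if 1 ≤ k ∧ k ≤ i then -((C (R := R)) π * g (k - 1 + q - i)) else 0)

theorem X_pow_mul_umap (π : R) {q : ℕ} (hq : 0 < q) {i : ℕ} (hi : i < q) (g : ℕ → R⟦X⟧) :
    X ^ i * Umap π q g = Umap π q (Emap π q i g) := by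
  have hs0 := constantCoeff_sps π hq
  set s : R⟦X⟧ := sps π q with hs
  have hXq : X ^ q = s - (C (R := R)) π * X := by rw [hs, sps]; ring
  have hterm : ∀ j ∈ range q, X ^ i * (X ^ j * PSComp (g j) s) =
      (if i + j < q then X ^ (i + j) * PSComp (g j) s else 0)
      + ((if q ≤ i + j then X ^ (i + j - q) * (s * PSComp (g j) s) else 0)
      + (if q ≤ i + j then -(X ^ (i + j - q + 1) * ((C (R := R)) π * PSComp (g j) s)) else 0)) := by
    intro j hj
    rw [mem_range] at hj
    by_cases hij : i + j < q
    · rw [if_pos hij, if_neg (by omega), if_neg (by omega), ← mul_assoc, ← pow_add]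
      ring
    · rw [if_neg hij, if_pos (by omega), if_pos (by omega)]
      have hX : (X : R⟦X⟧) ^ (i + j) = X ^ (i + j - q) * X ^ q := by
        rw [← pow_add]; congr 1; omega
      rw [← mul_assoc, ← pow_add, hX, hXq, pow_succ]
      ring
  have hterm2 : ∀ k ∈ range q, X ^ k * PSComp (Emap π q i g k) s =
      (if i ≤ k then X ^ k * PSComp (g (k - i)) s else 0)
      + ((if k < i then X ^ k * (s * PSComp (g (k + q - i)) s) else 0)
      + (if 1 ≤ k ∧ k ≤ i then -(X ^ k * ((C (R := R)) π * PSComp (g (k - 1 + q - i)) s)) else 0)) := by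
    intro k _
    rw [Emap, psComp_add, psComp_add, mul_add, mul_add, add_assoc]
    congr 1
    · by_cases h : i ≤ k
      · rw [if_pos h, if_pos h]
      · rw [if_neg h, if_neg h, psComp_zero, mul_zero]
    congr 1
    · by_cases h : k < i
      · rw [if_pos h, if_pos h, psComp_X_mul _ _ hs0]
      · rw [if_neg h, if_neg h, psComp_zero, mul_zero]
    · by_cases h : 1 ≤ k ∧ k ≤ i
      · rw [if_pos h, if_pos h, psComp_neg, psComp_C_mul]
        ring
      · rw [if_neg h, if_neg h, psComp_zero, mul_zero]
  rw [Umap, Finset.mul_sum, Finset.sum_congr rfl hterm, Umap, Finset.sum_congr rfl hterm2]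
  rw [Finset.sum_add_distrib, Finset.sum_add_distrib, Finset.sum_add_distrib,
    Finset.sum_add_distrib]
  congr 1
  · -- first pieces
    rw [Finset.sum_congr rfl (fun j hj => if_congr (show i + j < q ↔ j < q - i by omega)
        rfl rfl), sum_ite_lt (by omega : q - i ≤ q), sum_ite_le (le_of_lt hi)]
    refine Finset.sum_congr rfl fun j _ => ?_
    rw [Nat.add_sub_cancel_left]
  congr 1
  · rw [Finset.sum_congr rfl (fun j hj => if_congr (show q ≤ i + j ↔ q - i ≤ j by omega)
        rfl rfl), sum_ite_le (by omega : q - i ≤ q), sum_ite_lt (le_of_lt hi),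
        show q - (q - i) = i by omega]
    refine Finset.sum_congr rfl fun k _ => ?_
    rw [show i + (q - i + k) - q = k by omega, show q - i + k = k + q - i by omega]
  · rw [Finset.sum_congr rfl (fun j hj => if_congr (show q ≤ i + j ↔ q - i ≤ j by omega)
        rfl rfl), sum_ite_le (by omega : q - i ≤ q), show q - (q - i) = i by omega]
    rw [show range q = range ((q - 1) + 1) from by rw [Nat.sub_add_cancel hq],
      Finset.sum_range_succ']
    rw [if_neg (by omega), add_zero]
    rw [Finset.sum_congr rfl (fun k hk => if_congr (show 1 ≤ k + 1 ∧ k + 1 ≤ i ↔ k < i by omega)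
        rfl rfl), sum_ite_lt (by omega : i ≤ q - 1)]
    refine Finset.sum_congr rfl fun k _ => ?_
    rw [show i + (q - i + k) - q + 1 = k + 1 by omega, show k + 1 - 1 + q - i = q - i + k by omega]

theorem emap_diag (π : R) {q i : ℕ} (hq : 0 < q) (hi : i < q) (g : ℕ → R⟦X⟧) :
    Emap π q i g i = g 0 + (if 1 ≤ i then -((C (R := R)) π * g (q - 1)) else 0) := by
  rw [Emap, if_pos le_rfl, if_neg (lt_irrefl i), Nat.sub_self, add_zero]
  congr 1
  by_cases h : 1 ≤ i
  · rw [if_pos ⟨h, le_rfl⟩, if_pos h, show i - 1 + q - i = q - 1 by omega]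
  · rw [if_neg (fun hc => h hc.1), if_neg h]

theorem sps_def (π : R) (q : ℕ) : sps π q = (C (R := R)) π * X + X ^ q := rfl

theorem umap_congr (π : R) (q : ℕ) {g h : ℕ → R⟦X⟧} (H : ∀ k < q, g k = h k) :
    Umap π q g = Umap π q h :=
  Finset.sum_congr rfl fun k hk => by rw [H k (mem_range.1 hk)]

end Stmt8

set_option synthInstance.maxHeartbeats 1000000 in
theorem sep_aux (p : ℕ) [Fact p.Prime] (F : Type*) [Field F] [Algebra ℚ_[p] F]
    [FiniteDimensional ℚ_[p] F] [Algebra ℤ_[p] F] [IsScalarTower ℤ_[p] ℚ_[p] F]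
    (π : ↥(integralClosure ℤ_[p] F)) (hπ : Irreducible π) (x : ↥(integralClosure ℤ_[p] F))
    (hx : ∀ n, π ^ n ∣ x) : x = 0 := by
  haveI : IsNoetherianRing ↥(integralClosure ℤ_[p] F) :=
    IsIntegralClosure.isNoetherianRing ℤ_[p] ℚ_[p] F ↥(integralClosure ℤ_[p] F)
  have hmem : x ∈ ⨅ n : ℕ, (Ideal.span {π} : Ideal ↥(integralClosure ℤ_[p] F)) ^ n :=
    Ideal.mem_iInf.2 fun n => by
      rw [Ideal.span_singleton_pow]; exact Ideal.mem_span_singleton.2 (hx n)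
  rw [Ideal.iInf_pow_eq_bot_of_isDomain (I := Ideal.span {π})
    (fun h => hπ.not_isUnit (Ideal.span_singleton_eq_top.1 h))] at hmem
  simpa using hmem

open Stmt8 Finset in
/-- For `q = p^2`, uniformizer `p`, `[p](X) = pX + X^q`, the kernel of `ψ` is
`(⊕_(i=1)^(q-2) X^i φ(o_F[[X]])) ⊕ (pX^(q-1) - (1-q)) φ(o_F[[X]])`. -/
theorem stmt8 (p : ℕ) [Fact p.Prime] (F : Type*) [Field F] [Algebra ℚ_[p] F]
    [FiniteDimensional ℚ_[p] F] [Algebra ℤ_[p] F] [IsScalarTower ℤ_[p] ℚ_[p] F]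
    (O : Subalgebra ℤ_[p] F) (hO : O = integralClosure ℤ_[p] F)
    (hπ : Irreducible ((p : ℕ) : ↥O)) (q : ℕ) (hq2 : q = p ^ 2)
    (hq : Nat.card (↥O ⧸ Ideal.span {((p : ℕ) : ↥O)}) = q)
    -- `D f` is the (unique) decomposition of `f` in the basis `1, X, ..., X^(q-1)` of
    -- `↥O⟦X⟧` over `φ(↥O⟦X⟧)`, where `φ(h) = h(PowerSeries.C (R := ↥O) ((p : ℕ) : ↥O) * PowerSeries.X + PowerSeries.X ^ q)`:
    (D : PowerSeries ↥O → Fin q → PowerSeries ↥O)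
    (hD : ∀ f : PowerSeries ↥O,
      f = ∑ i : Fin q, PowerSeries.X ^ (i : ℕ) * PSComp (D f i) (PowerSeries.C (R := ↥O) ((p : ℕ) : ↥O) * PowerSeries.X + PowerSeries.X ^ q))
    -- `ψ` is characterized by `φ(ψ(f)) = (1/π)·Tr(f)`, i.e. `π·ψ(f)` is the sum of the
    -- diagonal entries of the matrix of multiplication by `f` in the above basis:
    (ψ : PowerSeries ↥O → PowerSeries ↥O)
    (hψ : ∀ f : PowerSeries ↥O,
      PowerSeries.C (R := ↥O) (((p : ℕ) : ↥O)) * ψ f = ∑ i : Fin q, D (PowerSeries.X ^ (i : ℕ) * f) i) :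
    ∀ f : PowerSeries ↥O, ψ f = 0 ↔
      ∃! u : Fin (q - 1) → PowerSeries ↥O,
        f = ∑ i : Fin (q - 1),
          (if (i : ℕ) + 1 ≤ q - 2 then PowerSeries.X ^ ((i : ℕ) + 1)
            else PowerSeries.C (R := ↥O) ((p : ℕ) : ↥O) * PowerSeries.X ^ (q - 1) -
              PowerSeries.C (R := ↥O) (1 - ((q : ℕ) : ↥O))) *
          PSComp (u i) (PowerSeries.C (R := ↥O) ((p : ℕ) : ↥O) * PowerSeries.X + PowerSeries.X ^ q) := by
  subst hO
  have hp2 : 2 ≤ p := (Fact.out : p.Prime).two_le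
  have hq4 : 4 ≤ q := by subst hq2; nlinarith
  have hq0 : 0 < q := by omega
  set π : ↥(integralClosure ℤ_[p] F) := ((p : ℕ) : ↥(integralClosure ℤ_[p] F)) with hπdef
  have hπ0 : π ≠ 0 := hπ.ne_zero
  have hCπ0 : (C (R := ↥(integralClosure ℤ_[p] F))) π ≠ 0 := fun h => hπ0 (by simpa using congrArg ((constantCoeff (R := ↥(integralClosure ℤ_[p] F)))) h)
  -- separatedness
  have hsep : ∀ x : ↥(integralClosure ℤ_[p] F), (∀ n, π ^ n ∣ x) → x = 0 :=
    fun x hx => sep_aux p F π hπ x hx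
  -- decomposition as Umap
  set gD : PowerSeries ↥(integralClosure ℤ_[p] F) → ℕ → PowerSeries ↥(integralClosure ℤ_[p] F) :=
    fun f n => if h : n < q then D f ⟨n, h⟩ else 0 with hgD
  have hUf : ∀ f : PowerSeries ↥(integralClosure ℤ_[p] F), f = Umap π q (gD f) := by
    intro f
    rw [Umap, ← Fin.sum_univ_eq_sum_range (fun n => X ^ n * PSComp (gD f n) (sps π q)) q]
    calc f = ∑ i : Fin q, X ^ (i : ℕ) * PSComp (D f i) ((C (R := ↥(integralClosure ℤ_[p] F))) π * X + X ^ q) := hD f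
      _ = _ := by
        refine Finset.sum_congr rfl fun i _ => ?_
        rw [sps_def]
        simp only [hgD, dif_pos i.isLt, Fin.eta]
  -- the ψ formula
  set c : ↥(integralClosure ℤ_[p] F) := ((q : ℕ) : ↥(integralClosure ℤ_[p] F)) - 1 with hcdef
  have hCc : (C (R := ↥(integralClosure ℤ_[p] F))) c = (C (R := ↥(integralClosure ℤ_[p] F))) π * (C (R := ↥(integralClosure ℤ_[p] F))) π - 1 := by
    have : ((q : ℕ) : ↥(integralClosure ℤ_[p] F)) = π * π := by rw [hq2]; push_cast [hπdef]; ring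
    rw [hcdef, this, map_sub, map_mul, map_one]
  have hψf : ∀ f : PowerSeries ↥(integralClosure ℤ_[p] F), ψ f = (C (R := ↥(integralClosure ℤ_[p] F))) π * gD f 0 - (C (R := ↥(integralClosure ℤ_[p] F))) c * gD f (q - 1) := by
    intro f
    have hstep : ∀ i : Fin q, D (X ^ (i : ℕ) * f) i =
        gD f 0 + (if 1 ≤ (i : ℕ) then -((C (R := ↥(integralClosure ℤ_[p] F))) π * gD f (q - 1)) else 0) := by
      intro i
      have h1 : Umap π q (gD (X ^ (i : ℕ) * f)) = Umap π q (Emap π q (i : ℕ) (gD f)) := by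
        rw [← hUf _, ← X_pow_mul_umap π hq0 i.isLt, ← hUf f]
      have h2 := umap_inj π hπ0 hq0 hsep h1 (i : ℕ) i.isLt
      have h3 : gD (X ^ (i : ℕ) * f) (i : ℕ) = D (X ^ (i : ℕ) * f) i := by
        simp only [hgD, dif_pos i.isLt, Fin.eta]
      rw [← h3, h2, emap_diag π hq0 i.isLt]
    have hsum2 : ∑ i : Fin q, (if 1 ≤ (i : ℕ) then -((C (R := ↥(integralClosure ℤ_[p] F))) π * gD f (q - 1)) else 0) =
        (q - 1 : ℕ) • (-((C (R := ↥(integralClosure ℤ_[p] F))) π * gD f (q - 1))) := by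
      rw [Fin.sum_univ_eq_sum_range (fun n => if 1 ≤ n then -((C (R := ↥(integralClosure ℤ_[p] F))) π * gD f (q - 1)) else 0) q,
        show range q = range ((q - 1) + 1) from by rw [Nat.sub_add_cancel hq0],
        Finset.sum_range_succ']
      rw [if_neg (by omega), add_zero,
        Finset.sum_congr rfl (fun k _ => if_pos (by omega)), Finset.sum_const, card_range]
    have hmain : (C (R := ↥(integralClosure ℤ_[p] F))) π * ψ f =
        (q : ℕ) • gD f 0 + (q - 1 : ℕ) • (-((C (R := ↥(integralClosure ℤ_[p] F))) π * gD f (q - 1))) := by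
      rw [hψ f, Finset.sum_congr rfl (fun i _ => hstep i), Finset.sum_add_distrib, hsum2,
        Finset.sum_const, card_univ, Fintype.card_fin]
    have hcast1 : ((q : ℕ) : PowerSeries ↥(integralClosure ℤ_[p] F)) = (C (R := ↥(integralClosure ℤ_[p] F))) π * (C (R := ↥(integralClosure ℤ_[p] F))) π := by
      rw [← map_natCast ((C (R := ↥(integralClosure ℤ_[p] F)))) q, hq2]; push_cast [hπdef]; rw [pow_two, map_mul]
    have hcast2 : ((q - 1 : ℕ) : PowerSeries ↥(integralClosure ℤ_[p] F)) = (C (R := ↥(integralClosure ℤ_[p] F))) c := by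
      rw [← map_natCast ((C (R := ↥(integralClosure ℤ_[p] F)))) (q - 1)]
      congr 1
      rw [hcdef, Nat.cast_sub hq0, Nat.cast_one]
    apply mul_left_cancel₀ hCπ0
    rw [hmain, nsmul_eq_mul, nsmul_eq_mul, hcast1, hcast2]
    ring
  -- the candidate space
  intro f
  set u' : (Fin (q - 1) → PowerSeries ↥(integralClosure ℤ_[p] F)) → ℕ → PowerSeries ↥(integralClosure ℤ_[p] F) :=
    fun u n => if h : n < q - 1 then u ⟨n, h⟩ else 0 with hu'
  set g' : (Fin (q - 1) → PowerSeries ↥(integralClosure ℤ_[p] F)) → ℕ → PowerSeries ↥(integralClosure ℤ_[p] F) :=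
    fun u k => if k = 0 then (C (R := ↥(integralClosure ℤ_[p] F))) c * u' u (q - 2)
      else if k = q - 1 then (C (R := ↥(integralClosure ℤ_[p] F))) π * u' u (q - 2) else u' u (k - 1) with hg'
  have hu'v : ∀ (v : Fin (q - 1) → PowerSeries ↥(integralClosure ℤ_[p] F)) (n : ℕ) (h : n < q - 1),
      u' v n = v ⟨n, h⟩ := by
    intro v n h; rw [hu']; beta_reduce; rw [dif_pos h]
  have hg'0 : ∀ v, g' v 0 = (C (R := ↥(integralClosure ℤ_[p] F))) c * u' v (q - 2) := by
    intro v; rw [hg']; beta_reduce; rw [if_pos rfl]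
  have hg'q1 : ∀ v, g' v (q - 1) = (C (R := ↥(integralClosure ℤ_[p] F))) π * u' v (q - 2) := by
    intro v; rw [hg']; beta_reduce; rw [if_neg (by omega : ¬(q - 1 = 0)), if_pos rfl]
  have hg'mid : ∀ v k, k ≠ 0 → k ≠ q - 1 → g' v k = u' v (k - 1) := by
    intro v k h1 h2; rw [hg']; beta_reduce; rw [if_neg h1, if_neg h2]
  have hT : ∀ u : Fin (q - 1) → PowerSeries ↥(integralClosure ℤ_[p] F),
      (∑ i : Fin (q - 1),
        (if (i : ℕ) + 1 ≤ q - 2 then (X : PowerSeries ↥(integralClosure ℤ_[p] F)) ^ ((i : ℕ) + 1)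
          else (C (R := ↥(integralClosure ℤ_[p] F))) π * X ^ (q - 1) - (C (R := ↥(integralClosure ℤ_[p] F))) (1 - ((q : ℕ) : ↥(integralClosure ℤ_[p] F)))) *
        PSComp (u i) ((C (R := ↥(integralClosure ℤ_[p] F))) π * X + X ^ q)) = Umap π q (g' u) := by
    intro u
    have hC1q : (C (R := ↥(integralClosure ℤ_[p] F))) (1 - ((q : ℕ) : ↥(integralClosure ℤ_[p] F))) = -((C (R := ↥(integralClosure ℤ_[p] F))) c) := by
      rw [show (1 - ((q : ℕ) : ↥(integralClosure ℤ_[p] F))) = -c from by rw [hcdef]; ring, map_neg]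
    have hL : (∑ i : Fin (q - 1),
        (if (i : ℕ) + 1 ≤ q - 2 then (X : PowerSeries ↥(integralClosure ℤ_[p] F)) ^ ((i : ℕ) + 1)
          else (C (R := ↥(integralClosure ℤ_[p] F))) π * X ^ (q - 1) - (C (R := ↥(integralClosure ℤ_[p] F))) (1 - ((q : ℕ) : ↥(integralClosure ℤ_[p] F)))) *
        PSComp (u i) ((C (R := ↥(integralClosure ℤ_[p] F))) π * X + X ^ q)) =
        (∑ n ∈ range (q - 2), X ^ (n + 1) * PSComp (u' u n) (sps π q))
        + ((C (R := ↥(integralClosure ℤ_[p] F))) π * X ^ (q - 1) - (C (R := ↥(integralClosure ℤ_[p] F))) (1 - ((q : ℕ) : ↥(integralClosure ℤ_[p] F)))) * PSComp (u' u (q - 2)) (sps π q) := by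
      rw [show (∑ i : Fin (q - 1),
          (if (i : ℕ) + 1 ≤ q - 2 then (X : PowerSeries ↥(integralClosure ℤ_[p] F)) ^ ((i : ℕ) + 1)
            else (C (R := ↥(integralClosure ℤ_[p] F))) π * X ^ (q - 1) - (C (R := ↥(integralClosure ℤ_[p] F))) (1 - ((q : ℕ) : ↥(integralClosure ℤ_[p] F)))) *
          PSComp (u i) ((C (R := ↥(integralClosure ℤ_[p] F))) π * X + X ^ q)) =
          ∑ n ∈ range (q - 1),
          (if n + 1 ≤ q - 2 then (X : PowerSeries ↥(integralClosure ℤ_[p] F)) ^ (n + 1)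
            else (C (R := ↥(integralClosure ℤ_[p] F))) π * X ^ (q - 1) - (C (R := ↥(integralClosure ℤ_[p] F))) (1 - ((q : ℕ) : ↥(integralClosure ℤ_[p] F)))) *
          PSComp (u' u n) (sps π q) from ?_]
      · rw [show range (q - 1) = range ((q - 2) + 1) from by congr 1; omega,
          Finset.sum_range_succ, if_neg (by omega)]
        congr 1
        exact Finset.sum_congr rfl fun n hn => by rw [if_pos (by have := mem_range.1 hn; omega)]
      · rw [← Fin.sum_univ_eq_sum_range]
        refine Finset.sum_congr rfl fun i _ => ?_
        rw [sps_def, hu'v u (i : ℕ) i.isLt, Fin.eta]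
    rw [hL, Umap,
      show range q = range ((q - 1) + 1) from by rw [Nat.sub_add_cancel hq0],
      Finset.sum_range_succ,
      show range (q - 1) = range ((q - 2) + 1) from by congr 1; omega,
      Finset.sum_range_succ']
    have hmid : ∀ n ∈ range (q - 2), (X : PowerSeries ↥(integralClosure ℤ_[p] F)) ^ (n + 1) * PSComp (g' u (n + 1)) (sps π q)
        = X ^ (n + 1) * PSComp (u' u n) (sps π q) := by
      intro n hn
      have hn' := mem_range.1 hn
      rw [hg'mid u (n + 1) (by omega) (by omega), Nat.add_sub_cancel]
    rw [Finset.sum_congr rfl hmid, hg'0, hg'q1, psComp_C_mul, psComp_C_mul, hC1q]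
    ring
  -- injectivity on candidates
  have hTinj : ∀ v w : Fin (q - 1) → PowerSeries ↥(integralClosure ℤ_[p] F),
      Umap π q (g' v) = Umap π q (g' w) → v = w := by
    intro v w h
    have hcomp := umap_inj π hπ0 hq0 hsep h
    funext i
    by_cases hi2 : (i : ℕ) = q - 2
    · have h1 := hcomp (q - 1) (by omega)
      rw [hg'q1 v, hg'q1 w] at h1
      have h2 := mul_left_cancel₀ hCπ0 h1
      rw [hu'v v (q - 2) (by omega), hu'v w (q - 2) (by omega)] at h2
      have hieq : i = (⟨q - 2, by omega⟩ : Fin (q - 1)) := Fin.ext hi2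
      rw [hieq]
      exact h2
    · have h1 := hcomp ((i : ℕ) + 1) (by have := i.isLt; omega)
      rw [hg'mid v _ (by omega) (by have := i.isLt; omega),
        hg'mid w _ (by omega) (by have := i.isLt; omega), Nat.add_sub_cancel,
        hu'v v (i : ℕ) i.isLt, hu'v w (i : ℕ) i.isLt] at h1
      simpa only [Fin.eta] using h1
  constructor
  · intro hψ0
    have hkey : (C (R := ↥(integralClosure ℤ_[p] F))) π * gD f 0 = (C (R := ↥(integralClosure ℤ_[p] F))) c * gD f (q - 1) := by
      have h1 := hψf f
      rw [hψ0] at h1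
      exact sub_eq_zero.1 h1.symm
    rw [hCc] at hkey
    set w : PowerSeries ↥(integralClosure ℤ_[p] F) := (C (R := ↥(integralClosure ℤ_[p] F))) π * gD f (q - 1) - gD f 0 with hw
    set u : Fin (q - 1) → PowerSeries ↥(integralClosure ℤ_[p] F) :=
      fun i => if (i : ℕ) = q - 2 then w else gD f ((i : ℕ) + 1) with hu
    have huval : ∀ (n : ℕ) (h : n < q - 1),
        u ⟨n, h⟩ = if n = q - 2 then w else gD f (n + 1) := by
      intro n h; rw [hu]
    have hweq : u' u (q - 2) = w := by
      rw [hu'v u (q - 2) (by omega), huval, if_pos rfl]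
    have hfeq : f = ∑ i : Fin (q - 1),
        (if (i : ℕ) + 1 ≤ q - 2 then (X : PowerSeries ↥(integralClosure ℤ_[p] F)) ^ ((i : ℕ) + 1)
          else (C (R := ↥(integralClosure ℤ_[p] F))) π * X ^ (q - 1) - (C (R := ↥(integralClosure ℤ_[p] F))) (1 - ((q : ℕ) : ↥(integralClosure ℤ_[p] F)))) *
        PSComp (u i) ((C (R := ↥(integralClosure ℤ_[p] F))) π * X + X ^ q) := by
      rw [hT u]
      rw [hUf f]
      apply umap_congr
      intro k hk
      by_cases hk0 : k = 0
      · subst hk0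
        rw [hg'0, hweq, hw, hCc]
        linear_combination ((C (R := ↥(integralClosure ℤ_[p] F))) π) * hkey
      · by_cases hkq : k = q - 1
        · subst hkq
          rw [hg'q1, hweq, hw]
          linear_combination hkey
        · rw [hg'mid u k hk0 hkq, hu'v u (k - 1) (by omega), huval,
            if_neg (by omega : ¬(k - 1 = q - 2)), show k - 1 + 1 = k from by omega]
    refine ⟨u, hfeq, ?_⟩
    intro v hv
    apply hTinj
    rw [← hT v, ← hT u, ← hv, ← hfeq]
  · rintro ⟨u, hu, -⟩
    have h1 : Umap π q (gD f) = Umap π q (g' u) := by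
      rw [← hUf f, ← hT u, ← hu]
    have hcomp := umap_inj π hπ0 hq0 hsep h1
    have h0 := hcomp 0 (by omega)
    have hq1 := hcomp (q - 1) (by omega)
    rw [hg'0] at h0
    rw [hg'q1] at hq1
    rw [hψf f, h0, hq1]
    ring
end

section
/- Let $F$ be a finite extension of $\mathbf{Q}_p$ with ring of integers $o_F$, and let $\operatorname{LT}$ be a Lubin--Tate formal group over $o_F$ with endomorphisms $[a](X) \in o_F[[X]]$ for $a \in o_F$. For each $f \in o_F[[X]]$ and $n \geq 0$, there exists a unique polynomial $c_{f,n}(T) \in F[T]$ such that $f([a](X)) = \sum_{n\geq 0} c_{f,n}(a) X^n$ for all $a \in o_F$; moreover $c_{f,n}$ is integer-valued, i.e. $c_{f,n}(o_F) \subset o_F$. -/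
open PowerSeries

/-- Evaluation `A(u,v)` of a two-variable power series `A ∈ R[[X,Y]] = (R[[X]])[[Y]]`
at `u, v` with zero constant term. -/
noncomputable def PSEval2 {R : Type*} [CommRing R] (A : PowerSeries (PowerSeries R))
    (u v : PowerSeries R) : PowerSeries R :=
  PowerSeries.mk fun m => ∑ j ∈ Finset.range (m + 1),
    PowerSeries.coeff (R := R) m (PSComp (PowerSeries.coeff (R := PowerSeries R) j A) u * v ^ j)

/-- A Lubin--Tate formal group over `O` attached to the uniformizer `π`, with residue
cardinality `q`: the addition law `add ∈ O[[X,Y]]`, the endomorphisms `[a](X)` for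
`a ∈ O`, normalized so that `[a](X) = aX + O(X^2)`, compatible with the ring structure
of `O`, and such that `[π](X) ≡ X^q mod π`. -/
structure LubinTate (O : Type*) [CommRing O] (π : O) (q : ℕ) where
  add : PowerSeries (PowerSeries O)
  endo : O → PowerSeries O
  endo_const : ∀ a, PowerSeries.constantCoeff (R := O) (endo a) = 0
  endo_lin : ∀ a, PowerSeries.coeff (R := O) 1 (endo a) = a
  endo_one : endo 1 = PowerSeries.X
  endo_mul : ∀ a b, endo (a * b) = PSComp (endo a) (endo b)
  endo_add : ∀ a b, endo (a + b) = PSEval2 add (endo a) (endo b)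
  add_X_zero : PSEval2 add PowerSeries.X 0 = PowerSeries.X
  add_zero_X : PSEval2 add 0 PowerSeries.X = PowerSeries.X
  endo_pi_frob : ∀ n : ℕ,
    PowerSeries.coeff (R := O) n (endo π) - (if n = q then 1 else 0) ∈ Ideal.span {π}

/-- A function `h : R → R` is representable by a polynomial over `S` via `φ`. -/
def IsRepr {R S : Type*} [CommRing R] [CommRing S] (φ : R →+* S) (h : R → R) : Prop :=
  ∃ P : Polynomial S, ∀ a : R, Polynomial.eval (φ a) P = φ (h a)

theorem isRepr_const {R S : Type*} [CommRing R] [CommRing S] (φ : R →+* S) (c : R) :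
    IsRepr φ (fun _ => c) := ⟨Polynomial.C (φ c), by simp⟩

theorem IsRepr.mul {R S : Type*} [CommRing R] [CommRing S] {φ : R →+* S} {h1 h2 : R → R}
    (H1 : IsRepr φ h1) (H2 : IsRepr φ h2) : IsRepr φ (fun a => h1 a * h2 a) := by
  obtain ⟨P1, hP1⟩ := H1; obtain ⟨P2, hP2⟩ := H2
  exact ⟨P1 * P2, fun a => by simp [hP1 a, hP2 a]⟩

theorem IsRepr.add {R S : Type*} [CommRing R] [CommRing S] {φ : R →+* S} {h1 h2 : R → R}
    (H1 : IsRepr φ h1) (H2 : IsRepr φ h2) : IsRepr φ (fun a => h1 a + h2 a) := by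
  obtain ⟨P1, hP1⟩ := H1; obtain ⟨P2, hP2⟩ := H2
  exact ⟨P1 + P2, fun a => by simp [hP1 a, hP2 a]⟩

theorem IsRepr.sub {R S : Type*} [CommRing R] [CommRing S] {φ : R →+* S} {h1 h2 : R → R}
    (H1 : IsRepr φ h1) (H2 : IsRepr φ h2) : IsRepr φ (fun a => h1 a - h2 a) := by
  obtain ⟨P1, hP1⟩ := H1; obtain ⟨P2, hP2⟩ := H2
  exact ⟨P1 - P2, fun a => by simp [hP1 a, hP2 a]⟩

theorem isRepr_sum {R S ι : Type*} [CommRing R] [CommRing S] (φ : R →+* S)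
    (s : Finset ι) (h : ι → R → R) (H : ∀ i ∈ s, IsRepr φ (h i)) :
    IsRepr φ (fun a => ∑ i ∈ s, h i a) := by
  induction s using Finset.cons_induction with
  | empty => exact ⟨0, by simp⟩
  | cons i s hi ih =>
    simp only [Finset.sum_cons]
    exact (H i (Finset.mem_cons_self i s)).add (ih fun j hj => H j (Finset.mem_cons_of_mem hj))

theorem coeff_PSComp {R : Type*} [CommRing R] (f g : PowerSeries R) (m : ℕ) :
    coeff (R := R) m (PSComp f g) =
      ∑ k ∈ Finset.range (m + 1), coeff (R := R) k f * coeff (R := R) m (g ^ k) := by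
  simp [PSComp, coeff_mk, coeff_C_mul]

theorem coeff_pow_self {R : Type*} [CommRing R] (g : PowerSeries R)
    (hg : constantCoeff (R := R) g = 0) (n : ℕ) : coeff (R := R) n (g ^ n) = (coeff (R := R) 1 g) ^ n := by
  obtain ⟨h, rfl⟩ := X_dvd_iff.mpr hg
  rw [mul_pow]
  have h1 : coeff (R := R) 1 (X * h) = coeff (R := R) 0 h := coeff_succ_X_mul 0 h
  have h2 := coeff_X_pow_mul (h ^ n) n 0
  rw [zero_add] at h2
  rw [h2, h1]
  simp [coeff_zero_eq_constantCoeff]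

theorem isRepr_coeff_pow_aux {R S : Type*} [CommRing R] [CommRing S] (φ : R →+* S)
    (e : R → PowerSeries R) (he : ∀ a, constantCoeff (R := R) (e a) = 0)
    (m : ℕ) (hkey : ∀ l, l < m → IsRepr φ fun a => coeff (R := R) l (e a)) :
    ∀ k l, l ≤ m → (l < m ∨ 2 ≤ k) → IsRepr φ fun a => coeff (R := R) l ((e a) ^ k) := by
  intro k
  induction k with
  | zero =>
    intro l _ _
    simp only [pow_zero]
    exact isRepr_const φ _
  | succ k ihk =>
    intro l hlm hor
    rcases Nat.eq_zero_or_pos k with rfl | hk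
    · simp only [zero_add, pow_one]
      rcases hor with h | h
      · exact hkey l h
      · omega
    · have hrw : (fun a => coeff (R := R) l ((e a) ^ (k + 1))) = fun a =>
          ∑ ij ∈ Finset.HasAntidiagonal.antidiagonal l, coeff (R := R) ij.1 ((e a) ^ k) * coeff (R := R) ij.2 (e a) := by
        funext a; rw [pow_succ, coeff_mul]
      rw [hrw]
      apply isRepr_sum
      intro ij hij
      have hsum := Finset.HasAntidiagonal.mem_antidiagonal.mp hij
      rcases Nat.eq_zero_or_pos ij.2 with h2 | h2
      · have hz : (fun a => coeff (R := R) ij.1 ((e a) ^ k) * coeff (R := R) ij.2 (e a)) = fun _ => 0 := by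
          funext a; rw [h2, coeff_zero_eq_constantCoeff, he a, mul_zero]
        rw [hz]; exact ⟨0, by simp⟩
      rcases Nat.eq_zero_or_pos ij.1 with h1 | h1
      · have hz : (fun a => coeff (R := R) ij.1 ((e a) ^ k) * coeff (R := R) ij.2 (e a)) = fun _ => 0 := by
          funext a
          rw [h1, coeff_zero_eq_constantCoeff, map_pow, he a, zero_pow hk.ne', zero_mul]
        rw [hz]; exact ⟨0, by simp⟩
      · exact (ihk ij.1 (by omega) (Or.inl (by omega))).mul (hkey ij.2 (by omega))

theorem isRepr_coeff_pow {R S : Type*} [CommRing R] [CommRing S] (φ : R →+* S)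
    (e : R → PowerSeries R) (he : ∀ a, constantCoeff (R := R) (e a) = 0)
    (hkey : ∀ l, IsRepr φ fun a => coeff (R := R) l (e a)) :
    ∀ k l, IsRepr φ fun a => coeff (R := R) l ((e a) ^ k) := by
  intro k l
  exact isRepr_coeff_pow_aux φ e he (l + 1) (fun j _ => hkey j) k l (by omega) (by omega)

/-- For each `f ∈ o_F[[X]]` and `n`, there is a unique polynomial `c_(f,n) ∈ F[T]` with
`f([a](X)) = ∑ n, c_(f,n)(a) X^n` for all `a ∈ o_F`, and it is integer-valued. -/
theorem stmt9 (p : ℕ) [Fact p.Prime] (F : Type*) [Field F] [Algebra ℚ_[p] F]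
    [FiniteDimensional ℚ_[p] F] [Algebra ℤ_[p] F] [IsScalarTower ℤ_[p] ℚ_[p] F]
    (O : Subalgebra ℤ_[p] F) (hO : O = integralClosure ℤ_[p] F)
    (π : ↥O) (hπ : Irreducible π) (q : ℕ)
    (hq : Nat.card (↥O ⧸ Ideal.span {π}) = q)
    (LT : LubinTate ↥O π q) :
    ∀ (f : PowerSeries ↥O) (n : ℕ), ∃! c : Polynomial F,
      (∀ a : ↥O, Polynomial.eval (algebraMap ↥O F a) c =
        algebraMap ↥O F (PowerSeries.coeff (R := ↥O) n (PSComp f (LT.endo a)))) ∧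
      (∀ a : ↥O, Polynomial.eval (algebraMap ↥O F a) c ∈ O) := by
  intro f n
  set φ : ↥O →+* F := algebraMap ↥O F with hφdef
  have hφval : ∀ x : ↥O, φ x = (x : F) := fun x => rfl
  have hφinj : Function.Injective φ := by
    intro x y h
    rw [hφval, hφval] at h
    exact Subtype.ext h
  -- the key polynomiality of the coefficients of [a](X)
  have key : ∀ m : ℕ, IsRepr φ fun a => PowerSeries.coeff (R := ↥O) m (LT.endo a) := by
    intro m
    induction m using Nat.strong_induction_on with
    | _ m ih =>
    match m, ih with
    | 0, _ =>
      refine ⟨0, fun a => ?_⟩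
      have h0 : PowerSeries.coeff (R := ↥O) 0 (LT.endo a) = 0 := by
        rw [PowerSeries.coeff_zero_eq_constantCoeff, LT.endo_const]
      simp [h0]
    | 1, _ =>
      exact ⟨Polynomial.X, fun a => by simp [LT.endo_lin, hφval]⟩
    | (m + 2), ih =>
      have hpow := isRepr_coeff_pow_aux φ LT.endo LT.endo_const (m + 2)
        (fun l hl => ih l hl)
      -- the commutation identity  [a]∘[π] = [π]∘[a]
      have E : ∀ a : ↥O,
          ∑ k ∈ Finset.range (m + 3),
              PowerSeries.coeff (R := ↥O) k (LT.endo a) *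
                PowerSeries.coeff (R := ↥O) (m + 2) ((LT.endo π) ^ k) =
          ∑ k ∈ Finset.range (m + 3),
              PowerSeries.coeff (R := ↥O) k (LT.endo π) *
                PowerSeries.coeff (R := ↥O) (m + 2) ((LT.endo a) ^ k) := by
        intro a
        have hc : PSComp (LT.endo a) (LT.endo π) = PSComp (LT.endo π) (LT.endo a) := by
          rw [← LT.endo_mul, ← LT.endo_mul, mul_comm]
        have := congrArg (fun s => PowerSeries.coeff (R := ↥O) (m + 2) s) hc
        simpa [coeff_PSComp] using this
      have hL : ∀ a : ↥O,
          ∑ k ∈ Finset.range (m + 3),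
              PowerSeries.coeff (R := ↥O) k (LT.endo a) *
                PowerSeries.coeff (R := ↥O) (m + 2) ((LT.endo π) ^ k) =
          (∑ k ∈ Finset.range (m + 2),
              PowerSeries.coeff (R := ↥O) k (LT.endo a) *
                PowerSeries.coeff (R := ↥O) (m + 2) ((LT.endo π) ^ k)) +
            PowerSeries.coeff (R := ↥O) (m + 2) (LT.endo a) * π ^ (m + 2) := by
        intro a
        rw [Finset.sum_range_succ, coeff_pow_self _ (LT.endo_const π), LT.endo_lin]
      have hR : ∀ a : ↥O,
          ∑ k ∈ Finset.range (m + 3),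
              PowerSeries.coeff (R := ↥O) k (LT.endo π) *
                PowerSeries.coeff (R := ↥O) (m + 2) ((LT.endo a) ^ k) =
          (∑ k ∈ Finset.range (m + 1),
              PowerSeries.coeff (R := ↥O) (k + 2) (LT.endo π) *
                PowerSeries.coeff (R := ↥O) (m + 2) ((LT.endo a) ^ (k + 2))) +
            π * PowerSeries.coeff (R := ↥O) (m + 2) (LT.endo a) := by
        intro a
        rw [Finset.sum_range_succ', Finset.sum_range_succ']
        have h0 : PowerSeries.coeff (R := ↥O) 0 (LT.endo π) = 0 := by
          rw [PowerSeries.coeff_zero_eq_constantCoeff, LT.endo_const]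
        simp [h0, LT.endo_lin]
      have heq : ∀ a : ↥O, (π ^ (m + 2) - π) * PowerSeries.coeff (R := ↥O) (m + 2) (LT.endo a) =
          (∑ k ∈ Finset.range (m + 1),
              PowerSeries.coeff (R := ↥O) (k + 2) (LT.endo π) *
                PowerSeries.coeff (R := ↥O) (m + 2) ((LT.endo a) ^ (k + 2))) -
            ∑ k ∈ Finset.range (m + 2),
              PowerSeries.coeff (R := ↥O) k (LT.endo a) *
                PowerSeries.coeff (R := ↥O) (m + 2) ((LT.endo π) ^ k) := by
        intro a
        linear_combination E a - hL a + hR a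
      have hG : IsRepr φ fun a =>
          (∑ k ∈ Finset.range (m + 1),
              PowerSeries.coeff (R := ↥O) (k + 2) (LT.endo π) *
                PowerSeries.coeff (R := ↥O) (m + 2) ((LT.endo a) ^ (k + 2))) -
            ∑ k ∈ Finset.range (m + 2),
              PowerSeries.coeff (R := ↥O) k (LT.endo a) *
                PowerSeries.coeff (R := ↥O) (m + 2) ((LT.endo π) ^ k) := by
        apply IsRepr.sub
        · apply isRepr_sum
          intro k hk
          exact (isRepr_const φ _).mul (hpow (k + 2) (m + 2) le_rfl (Or.inr (by omega)))
        · apply isRepr_sum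
          intro k hk
          exact (ih k (Finset.mem_range.mp hk)).mul (isRepr_const φ _)
      -- π^(m+2) - π ≠ 0
      have hu : (π ^ (m + 2) - π : ↥O) ≠ 0 := by
        intro h
        have h2 : π * (π ^ (m + 1) - 1) = 0 := by ring_nf; linear_combination h
        rcases mul_eq_zero.mp h2 with h3 | h3
        · exact hπ.ne_zero h3
        · have h5 : π ^ (m + 1) = 1 := sub_eq_zero.mp h3
          have h4 : π * π ^ m = 1 := by rw [← pow_succ']; exact h5
          exact hπ.not_isUnit (IsUnit.of_mul_eq_one (π ^ m) h4)
      have hu' : φ (π ^ (m + 2) - π) ≠ 0 := fun h => hu (hφinj (by simpa using h))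
      obtain ⟨P, hP⟩ := hG
      refine ⟨Polynomial.C (φ (π ^ (m + 2) - π))⁻¹ * P, fun a => ?_⟩
      rw [Polynomial.eval_mul, Polynomial.eval_C, hP a]
      beta_reduce
      rw [← heq a, map_mul, inv_mul_cancel_left₀ hu']
  have hpowAll : ∀ k l, IsRepr φ fun a => PowerSeries.coeff (R := ↥O) l ((LT.endo a) ^ k) :=
    isRepr_coeff_pow φ LT.endo LT.endo_const key
  have hf : IsRepr φ fun a => PowerSeries.coeff (R := ↥O) n (PSComp f (LT.endo a)) := by
    simp only [coeff_PSComp]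
    exact isRepr_sum φ _ _ fun k _ => (isRepr_const φ _).mul (hpowAll k n)
  obtain ⟨P, hP⟩ := hf
  have hCZ : CharZero F := charZero_of_injective_algebraMap (algebraMap ℚ_[p] F).injective
  refine ⟨P, ⟨fun a => hP a, fun a => ?_⟩, ?_⟩
  · rw [hP a, hφval]
    exact SetLike.coe_mem _
  · rintro c ⟨hc1, -⟩
    have hsub : c - P = 0 := by
      apply Polynomial.eq_zero_of_infinite_isRoot
      apply Set.infinite_of_injective_forall_mem (f := fun k : ℕ => (k : F))
        Nat.cast_injective
      intro k
      have h1 := hc1 (k : ↥O)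
      have h2 := hP (k : ↥O)
      have h3 : φ ((k : ↥O)) = (k : F) := map_natCast φ k
      simp only [Set.mem_setOf_eq, Polynomial.IsRoot, Polynomial.eval_sub]
      rw [← h3, h1, h2, sub_self]
    exact sub_eq_zero.mp hsub
end
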